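/- arXiv:1711.05916 — 4 statements merged into one kernel-verified Lean document; each statement's English description precedes it below -/
import Mathlib

section
/- Let U ⊆ ℂ be a nonempty connected open set and let f, h : ℂ → ℂ be holomorphic on U (DifferentiableOn ℂ f U and DifferentiableOn ℂ h U). Suppose that ‖deriv f z‖ = ‖deriv h z‖ for every z ∈ U. Then there exist a real number α and a complex number c such that f z = Complex.exp (α * Complex.I) * h z + c for every z ∈ U. -/
open Complex Set Metric

/-- A differentiable function with zero derivative on a preconnected open set is constant. -/
lemma aux_const_of_deriv_zero {F : ℂ → ℂ} {U : Set ℂ} (hUopen : IsOpen U)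
    (hUconn : IsPreconnected U) {z₀ : ℂ} (hz₀ : z₀ ∈ U)
    (hF : DifferentiableOn ℂ F U) (h0 : ∀ z ∈ U, deriv F z = 0) :
    ∀ z ∈ U, F z = F z₀ := by
  have hFan : AnalyticOnNhd ℂ F U := hF.analyticOnNhd hUopen
  obtain ⟨r, hr, hball⟩ := Metric.isOpen_iff.mp hUopen z₀ hz₀
  have hfd0 : ∀ x ∈ ball z₀ r, fderivWithin ℂ F (ball z₀ r) x = 0 := by
    intro x hx
    have hd : DifferentiableAt ℂ F x :=
      hF.differentiableAt (hUopen.mem_nhds (hball hx))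
    have hFd : HasFDerivAt F ((1 : ℂ →L[ℂ] ℂ).smulRight (deriv F x)) x := by
      refine hd.hasFDerivAt.congr_fderiv ?_
      ext
      simp
    rw [fderivWithin_eq_fderiv ((isOpen_ball.uniqueDiffOn) x hx) hd,
      hFd.fderiv, h0 x (hball hx)]
    ext
    simp
  have hconst : ∀ x ∈ ball z₀ r, F x = F z₀ := fun x hx =>
    (convex_ball z₀ r).is_const_of_fderivWithin_eq_zero (hF.mono hball) hfd0 hx
      (mem_ball_self hr)
  have hev : F =ᶠ[nhds z₀] fun _ => F z₀ :=
    Filter.eventuallyEq_of_mem (Metric.ball_mem_nhds z₀ hr) hconst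
  exact fun z hz =>
    hFan.eqOn_of_preconnected_of_eventuallyEq analyticOnNhd_const hUconn hz₀ hev hz

theorem holomorphic_eq_deriv_norm_implies_rotation_translation
    (U : Set ℂ) (hUne : U.Nonempty) (hUopen : IsOpen U) (hUconn : IsConnected U)
    (f h : ℂ → ℂ) (hf : DifferentiableOn ℂ f U) (hh : DifferentiableOn ℂ h U)
    (hderiv : ∀ z ∈ U, ‖deriv f z‖ = ‖deriv h z‖) :
    ∃ (α : ℝ) (c : ℂ), ∀ z ∈ U,
      f z = Complex.exp (α * Complex.I) * h z + c := by
  have hfa : AnalyticOnNhd ℂ f U := hf.analyticOnNhd hUopen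
  have hha : AnalyticOnNhd ℂ h U := hh.analyticOnNhd hUopen
  have hfd : AnalyticOnNhd ℂ (deriv f) U := hfa.deriv
  have hhd : AnalyticOnNhd ℂ (deriv h) U := hha.deriv
  by_cases hcase : ∀ z ∈ U, deriv h z = 0
  · -- both derivatives vanish; f and h are constants
    obtain ⟨z₀, hz₀⟩ := hUne
    have hf0 : ∀ z ∈ U, deriv (fun w => f w - Complex.exp ((0:ℝ) * Complex.I) * h w) z = 0 := by
      intro z hz
      have hfz : DifferentiableAt ℂ f z := hf.differentiableAt (hUopen.mem_nhds hz)
      have hhz : DifferentiableAt ℂ h z := hh.differentiableAt (hUopen.mem_nhds hz)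
      have hfe : deriv f z = 0 := by
        have := hderiv z hz
        rw [hcase z hz] at this
        simpa using this
      rw [deriv_fun_sub hfz (hhz.const_mul _), deriv_const_mul _ hhz, hfe, hcase z hz]
      ring
    have := aux_const_of_deriv_zero hUopen hUconn.isPreconnected hz₀
      (hf.sub (hh.const_smul (Complex.exp ((0:ℝ) * Complex.I)) |>.congr
        (fun x _ => by simp [smul_eq_mul]))) hf0
    refine ⟨0, f z₀ - Complex.exp ((0:ℝ) * Complex.I) * h z₀, fun z hz => ?_⟩
    have := this z hz
    push_cast at this ⊢
    simp only [Pi.sub_apply] at this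
    linear_combination this
  · push_neg at hcase
    obtain ⟨z₀, hz₀, hz₀ne⟩ := hcase
    -- find a ball where deriv h ≠ 0
    have hcont : ContinuousOn (deriv h) U := hhd.continuousOn
    obtain ⟨r, hr, hball⟩ : ∃ r > 0, ball z₀ r ⊆ U ∩ {z | deriv h z ≠ 0} := by
      have : IsOpen (U ∩ {z | deriv h z ≠ 0}) :=
        hcont.isOpen_inter_preimage hUopen (isOpen_compl_singleton : IsOpen ({(0:ℂ)}ᶜ))
      exact Metric.isOpen_iff.mp this z₀ ⟨hz₀, hz₀ne⟩
    have hballU : ball z₀ r ⊆ U := fun x hx => (hball hx).1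
    have hballne : ∀ x ∈ ball z₀ r, deriv h x ≠ 0 := fun x hx => (hball hx).2
    -- g = deriv f / deriv h has constant modulus 1 on the ball
    set g : ℂ → ℂ := fun z => deriv f z / deriv h z with hg
    have hgd : DifferentiableOn ℂ g (ball z₀ r) :=
      ((hfd.differentiableOn.mono hballU).div (hhd.differentiableOn.mono hballU) hballne)
    have hgnorm : ∀ x ∈ ball z₀ r, ‖g x‖ = 1 := by
      intro x hx
      have := hderiv x (hballU hx)
      rw [hg]
      simp only [norm_div, this]
      exact div_self (norm_ne_zero_iff.mpr (hballne x hx))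
    have hmax : IsMaxOn (norm ∘ g) (ball z₀ r) z₀ := by
      intro x hx
      simp only [Function.comp_apply, Set.mem_setOf_eq, hgnorm x hx,
        hgnorm z₀ (mem_ball_self hr)]
      exact le_rfl
    have hgconst : ∀ x ∈ ball z₀ r, g x = g z₀ :=
      Complex.eqOn_of_isPreconnected_of_isMaxOn_norm (convex_ball z₀ r).isPreconnected
        isOpen_ball hgd (mem_ball_self hr) hmax
    set lam : ℂ := g z₀ with hlam
    have hlamnorm : ‖lam‖ = 1 := hgnorm z₀ (mem_ball_self hr)
    -- deriv f = lam * deriv h on the ball, hence on U by the identity theorem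
    have hball_eq : ∀ x ∈ ball z₀ r, deriv f x = lam * deriv h x := by
      intro x hx
      have := hgconst x hx
      rw [hg] at this
      exact (div_eq_iff (hballne x hx)).mp this
    have hev : deriv f =ᶠ[nhds z₀] fun z => lam * deriv h z :=
      Filter.eventuallyEq_of_mem (Metric.ball_mem_nhds z₀ hr) hball_eq
    have hUeq : ∀ z ∈ U, deriv f z = lam * deriv h z := fun z hz =>
      hfd.eqOn_of_preconnected_of_eventuallyEq (analyticOnNhd_const.mul hhd)
        hUconn.isPreconnected hz₀ hev hz
    -- F = f - lam * h has zero derivative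
    have hFdiff : DifferentiableOn ℂ (fun w => f w - lam * h w) U :=
      hf.sub ((hh.const_smul lam).congr (fun x _ => by simp [smul_eq_mul]))
    have hF0 : ∀ z ∈ U, deriv (fun w => f w - lam * h w) z = 0 := by
      intro z hz
      have hfz : DifferentiableAt ℂ f z := hf.differentiableAt (hUopen.mem_nhds hz)
      have hhz : DifferentiableAt ℂ h z := hh.differentiableAt (hUopen.mem_nhds hz)
      rw [deriv_fun_sub hfz (hhz.const_mul _), deriv_const_mul _ hhz, hUeq z hz]
      ring
    have hconst := aux_const_of_deriv_zero hUopen hUconn.isPreconnected hz₀ hFdiff hF0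
    refine ⟨Complex.arg lam, f z₀ - lam * h z₀, fun z hz => ?_⟩
    have hlameq : Complex.exp ((Complex.arg lam : ℂ) * Complex.I) = lam := by
      have := Complex.norm_mul_exp_arg_mul_I lam
      rw [hlamnorm] at this
      simpa using this
    rw [hlameq]
    have := hconst z hz
    linear_combination this
end

section
/- Fix τ ∈ ℂ with Im τ ≠ 0 and let Λ = {m + n·τ : m, n ∈ ℤ}. For every p ∈ ℂ there exists a Λ-elliptic function f : ℂ → ℂ such that f is analytic at every point z ∉ p + Λ (i.e. meromorphicOrderAt f z ≥ 0 there, and f is analytic on the complement of p + Λ) and meromorphicOrderAt f z = −2 for every z ∈ p + Λ. (Such an f is given by the Weierstrass ℘-function translated by p.) -/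
-- The order of a meromorphic function at a point, as an element of `ℤ ∪ {∞}`
-- (junk value `0` if the function is not meromorphic at the point).
open Classical in
noncomputable def meromorphicOrderAt' (f : ℂ → ℂ) (x : ℂ) : WithTop ℤ :=
  if h : MeromorphicAt f x then _root_.meromorphicOrderAt f x else 0

/-- The lattice `Λ = {m + n·τ : m, n ∈ ℤ}` generated by `1` and `τ`. -/
def latticeSet (τ : ℂ) : Set ℂ := {z | ∃ m n : ℤ, z = (m : ℂ) + (n : ℂ) * τ}

/-- A function `h : ℂ → ℂ` is `Λ`-elliptic (for the lattice generated by `1` and `τ`)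
if it is meromorphic on all of `ℂ` and doubly periodic with periods `1` and `τ`. -/
def IsElliptic (τ : ℂ) (h : ℂ → ℂ) : Prop :=
  MeromorphicOn h Set.univ ∧ (∀ z, h (z + 1) = h z) ∧ (∀ z, h (z + τ) = h z)

open Filter Topology

namespace WPAux


/-- lattice point of index `c` -/
def om (τ : ℂ) (c : ℤ × ℤ) : ℂ := (c.1 : ℂ) + (c.2 : ℂ) * τ

/-- size of an index -/
def mc (c : ℤ × ℤ) : ℕ := max c.1.natAbs c.2.natAbs

noncomputable def Ec (τ : ℂ) (c : ℤ × ℤ) : ℂ := if c = 0 then 0 else ((om τ c) ^ 2)⁻¹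

noncomputable def g (τ p : ℂ) (c : ℤ × ℤ) (z : ℂ) : ℂ :=
  ((z - p - om τ c) ^ 2)⁻¹ - Ec τ c

noncomputable def wp (τ p : ℂ) (z : ℂ) : ℂ := ∑' c, g τ p c z

lemma om_sub (τ : ℂ) (a b : ℤ × ℤ) : om τ (a - b) = om τ a - om τ b := by
  simp only [om, Prod.fst_sub, Prod.snd_sub]
  push_cast
  ring

lemma om_inj {τ : ℂ} (hτ : τ.im ≠ 0) {a b : ℤ × ℤ} (h : om τ a = om τ b) : a = b := by
  have him := congrArg Complex.im h
  have hre := congrArg Complex.re h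
  simp only [om, Complex.add_im, Complex.intCast_im, Complex.mul_im, Complex.intCast_re,
    Complex.add_re, Complex.mul_re, Complex.intCast_im, zero_add, zero_mul, sub_zero] at him hre
  have h2 : (a.2 : ℝ) = b.2 := by
    have := mul_right_cancel₀ hτ (by linarith : (a.2 : ℝ) * τ.im = (b.2 : ℝ) * τ.im)
    exact this
  have h2' : a.2 = b.2 := by exact_mod_cast h2
  have h1' : a.1 = b.1 := by
    rw [h2] at hre
    have : (a.1 : ℝ) = b.1 := by linarith
    exact_mod_cast this
  exact Prod.ext h1' h2'

lemma exists_del {τ : ℂ} (hτ : 0 < τ.im) :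
    ∃ δ : ℝ, 0 < δ ∧ ∀ c : ℤ × ℤ, c ≠ 0 → δ * mc c ≤ ‖om τ c‖ := by
  refine ⟨EisensteinSeries.r ⟨τ, hτ⟩, EisensteinSeries.r_pos _, fun c hc ↦ ?_⟩
  have hx : (![c.2, c.1] : Fin 2 → ℤ) ≠ 0 := by
    intro h
    apply hc
    have h2 := congrFun h 0
    have h1 := congrFun h 1
    simp at h1 h2
    exact Prod.ext h1 h2
  have := EisensteinSeries.r_mul_max_le (⟨τ, hτ⟩ : UpperHalfPlane) hx
  rw [EisensteinSeries.norm_eq_max_natAbs] at this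
  simp only [Matrix.cons_val_zero, Matrix.cons_val_one, Matrix.head_cons,
    UpperHalfPlane.coe_mk_subtype] at this
  have habs : ‖(c.2 : ℂ) * τ + (c.1 : ℂ)‖ = ‖om τ c‖ := by
    rw [om]; ring_nf
  rw [habs] at this
  refine le_trans (le_of_eq ?_) this
  congr 1
  · simp [mc, Nat.cast_max, max_comm]

lemma om_le (τ : ℂ) (c : ℤ × ℤ) : ‖om τ c‖ ≤ (1 + ‖τ‖) * mc c := by
  have h1 : ‖om τ c‖ ≤ ‖(c.1 : ℂ)‖ + ‖(c.2 : ℂ) * τ‖ :=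
    norm_add_le _ _
  have e1 : ‖(c.1 : ℂ)‖ = (c.1.natAbs : ℝ) := by
    rw [Complex.norm_intCast, Nat.cast_natAbs]
    exact Int.cast_abs.symm
  have e2 : ‖(c.2 : ℂ)‖ = (c.2.natAbs : ℝ) := by
    rw [Complex.norm_intCast, Nat.cast_natAbs]
    exact Int.cast_abs.symm
  rw [norm_mul, e1, e2] at h1
  have b1 : (c.1.natAbs : ℝ) ≤ mc c := by exact_mod_cast Nat.cast_le.mpr (le_max_left _ _)
  have b2 : (c.2.natAbs : ℝ) ≤ mc c := by exact_mod_cast Nat.cast_le.mpr (le_max_right _ _)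
  have : (c.1.natAbs : ℝ) + (c.2.natAbs : ℝ) * ‖τ‖
      ≤ (mc c : ℝ) + (mc c : ℝ) * ‖τ‖ := by
    gcongr
  calc ‖om τ c‖ ≤ (c.1.natAbs : ℝ) + (c.2.natAbs : ℝ) * ‖τ‖ := h1
    _ ≤ (mc c : ℝ) + (mc c : ℝ) * ‖τ‖ := this
    _ = (1 + ‖τ‖) * mc c := by ring

lemma summable_invcube : Summable (fun c : ℤ × ℤ => ((mc c : ℝ) ^ 3)⁻¹) := by
  have h := EisensteinSeries.summable_one_div_norm_rpow (k := 3) (by norm_num)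
  have h2 := ((finTwoArrowEquiv ℤ).symm.summable_iff
    (f := fun (x : Fin 2 → ℤ) => ‖x‖ ^ (-3 : ℝ))).mpr h
  refine h2.congr fun c => ?_
  simp only [Function.comp, finTwoArrowEquiv_symm_apply]
  rw [EisensteinSeries.norm_eq_max_natAbs]
  simp only [Matrix.cons_val_zero, Matrix.cons_val_one, Matrix.head_cons]
  rw [show (-3 : ℝ) = -((3 : ℕ) : ℝ) by norm_num, Real.rpow_neg (by positivity),
    Real.rpow_natCast]
  simp [mc, Nat.cast_max]

lemma finite_mc_le (K : ℕ) : {c : ℤ × ℤ | mc c ≤ K}.Finite := by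
  apply Set.Finite.subset (Set.finite_Icc ((-(K : ℤ), -(K : ℤ))) ((K : ℤ), (K : ℤ)))
  intro c hc
  simp only [Set.mem_setOf_eq, mc, max_le_iff] at hc
  simp only [Set.mem_Icc, Prod.le_def]
  omega

lemma cofinite_mc_ge (N : ℕ) : ∀ᶠ c : ℤ × ℤ in cofinite, N ≤ mc c := by
  rw [eventually_cofinite]
  refine (finite_mc_le N).subset fun c hc => ?_
  simp only [Set.mem_setOf_eq] at hc ⊢
  omega

lemma mc_zero : mc 0 = 0 := by simp [mc]

lemma tail_bound (τ p : ℂ) {δ : ℝ} (hδ : 0 < δ)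
    (hlow : ∀ c : ℤ × ℤ, c ≠ 0 → δ * mc c ≤ ‖om τ c‖)
    (R : ℝ) (hR : 0 ≤ R) :
    ∃ (N : ℕ) (C : ℝ), 0 < N ∧ 0 ≤ C ∧ ∀ c : ℤ × ℤ, N ≤ mc c → ∀ z : ℂ,
      ‖z - p‖ ≤ R →
      δ * mc c / 2 ≤ ‖z - p - om τ c‖ ∧
      ‖g τ p c z‖ ≤ C * ((mc c : ℝ) ^ 3)⁻¹ := by
  refine ⟨⌈(2 * R + 2) / δ⌉₊ + 1, 4 * R * (2 * (1 + ‖τ‖) + δ) / δ ^ 4,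
    Nat.succ_pos _, ?_, fun c hc z hz => ?_⟩
  · positivity
  set M : ℝ := (mc c : ℝ) with hM
  have hM1 : (1 : ℝ) ≤ M := by
    have h : 1 ≤ mc c := le_trans (by omega) hc
    rw [hM]
    exact_mod_cast h
  have hM0 : 0 < M := by linarith
  have hc0 : c ≠ 0 := by
    intro h
    rw [h, mc_zero] at hc
    omega
  have hdM : 2 * R + 2 ≤ δ * M := by
    have h1 : (2 * R + 2) / δ ≤ (⌈(2 * R + 2) / δ⌉₊ : ℝ) := Nat.le_ceil _
    have h2 : ((⌈(2 * R + 2) / δ⌉₊ : ℝ) + 1) ≤ M := by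
      rw [hM]
      exact_mod_cast hc
    have h3 : (2 * R + 2) / δ * δ ≤ M * δ := by
      apply mul_le_mul_of_nonneg_right _ hδ.le
      linarith
    rw [div_mul_cancel₀ _ hδ.ne'] at h3
    linarith [h3]
  have hlow' : δ * M ≤ ‖om τ c‖ := hlow c hc0
  have hRle : R ≤ δ * M / 2 - 1 := by linarith
  set X : ℂ := z - p - om τ c with hX
  set Y : ℂ := om τ c with hY
  have hAX : δ * M / 2 ≤ ‖X‖ := by
    have h1 : ‖Y‖ - ‖z - p‖ ≤ ‖X‖ := by
      calc ‖Y‖ - ‖z - p‖ ≤ ‖Y - (z - p)‖ := norm_sub_norm_le _ _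
        _ = ‖X‖ := by rw [hX, norm_sub_rev]
    linarith
  refine ⟨hAX, ?_⟩
  have hXne : X ≠ 0 := by
    intro h
    rw [h, norm_zero] at hAX
    nlinarith
  have hYpos : 0 < ‖Y‖ := lt_of_lt_of_le (by positivity) hlow'
  have hYne : Y ≠ 0 := norm_pos_iff.mp hYpos
  have hid : g τ p c z = ((Y - X) * (Y + X)) * ((X ^ 2)⁻¹ * (Y ^ 2)⁻¹) := by
    rw [g, Ec, if_neg hc0, ← hX, ← hY]
    field_simp
    ring
  have hYle : ‖Y‖ ≤ (1 + ‖τ‖) * M := om_le τ c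
  have hRdM : R ≤ δ * M := by nlinarith
  have hYX : ‖Y - X‖ ≤ (2 * (1 + ‖τ‖) + δ) * M := by
    have h1 : Y - X = Y + Y - (z - p) := by rw [hX, hY]; ring
    rw [h1]
    calc ‖Y + Y - (z - p)‖ ≤ ‖Y + Y‖ + ‖z - p‖ := norm_sub_le _ _
      _ ≤ (‖Y‖ + ‖Y‖) + R := by gcongr; exact norm_add_le _ _
      _ ≤ ((1 + ‖τ‖) * M + (1 + ‖τ‖) * M) + δ * M := by gcongr
      _ = (2 * (1 + ‖τ‖) + δ) * M := by ring
  have hYpX : ‖Y + X‖ ≤ R := by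
    have : Y + X = z - p := by rw [hX, hY]; ring
    rw [this]; exact hz
  have hXinv : ‖(X ^ 2)⁻¹‖ ≤ ((δ * M / 2) ^ 2)⁻¹ := by
    rw [norm_inv, norm_pow]
    apply inv_anti₀ (by positivity)
    gcongr
  have hYinv : ‖(Y ^ 2)⁻¹‖ ≤ ((δ * M) ^ 2)⁻¹ := by
    rw [norm_inv, norm_pow]
    apply inv_anti₀ (by positivity)
    gcongr
  calc ‖g τ p c z‖ = ‖Y - X‖ * ‖Y + X‖ * (‖(X ^ 2)⁻¹‖ * ‖(Y ^ 2)⁻¹‖) := by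
        rw [hid, norm_mul, norm_mul, norm_mul]
    _ ≤ ((2 * (1 + ‖τ‖) + δ) * M) * R * (((δ * M / 2) ^ 2)⁻¹ * ((δ * M) ^ 2)⁻¹) := by
        gcongr <;> positivity
    _ = 4 * R * (2 * (1 + ‖τ‖) + δ) / δ ^ 4 * (M ^ 3)⁻¹ := by
        field_simp
        ring

lemma summable_g (τ p : ℂ) {δ : ℝ} (hδ : 0 < δ)
    (hlow : ∀ c : ℤ × ℤ, c ≠ 0 → δ * mc c ≤ ‖om τ c‖) (z : ℂ) :
    Summable (fun c : ℤ × ℤ => g τ p c z) := by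
  obtain ⟨N, C, hN, hC, hbd⟩ := tail_bound τ p hδ hlow ‖z - p‖ (norm_nonneg _)
  apply Summable.of_norm_bounded_eventually (summable_invcube.mul_left C)
  filter_upwards [cofinite_mc_ge N] with c hc
  exact (hbd c hc z le_rfl).2

lemma isClosed_of_finite_inter {s : Set ℂ} (h : ∀ R : ℝ, {w | w ∈ s ∧ ‖w‖ ≤ R}.Finite) :
    IsClosed s := by
  rw [← closure_subset_iff_isClosed]
  intro x hx
  have hsplit : s ⊆ {w | w ∈ s ∧ ‖w‖ ≤ ‖x‖ + 1} ∪ (s \ Metric.ball x 1) := by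
    intro w hw
    by_cases hb : w ∈ Metric.ball x 1
    · left
      refine ⟨hw, ?_⟩
      have hd : dist w x < 1 := Metric.mem_ball.mp hb
      rw [dist_eq_norm] at hd
      calc ‖w‖ = ‖x + (w - x)‖ := by ring_nf
        _ ≤ ‖x‖ + ‖w - x‖ := norm_add_le _ _
        _ ≤ ‖x‖ + 1 := by linarith
    · right; exact ⟨hw, hb⟩
  have hx2 := closure_mono hsplit hx
  rw [closure_union] at hx2
  rcases hx2 with h1 | h2
  · rw [(h (‖x‖ + 1)).isClosed.closure_eq] at h1
    exact h1.1
  · exfalso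
    have hsub : s \ Metric.ball x 1 ⊆ (Metric.ball x 1)ᶜ := fun w hw => hw.2
    have hcl : closure (s \ Metric.ball x 1) ⊆ (Metric.ball x 1)ᶜ := by
      rw [← (Metric.isOpen_ball.isClosed_compl).closure_eq]
      exact closure_mono hsub
    exact (hcl h2) (Metric.mem_ball_self one_pos)

lemma isClosed_latticeImage (τ p : ℂ) {δ : ℝ} (hδ : 0 < δ)
    (hlow : ∀ c : ℤ × ℤ, c ≠ 0 → δ * mc c ≤ ‖om τ c‖) (S : Set (ℤ × ℤ)) :
    IsClosed {w : ℂ | ∃ c ∈ S, w = p + om τ c} := by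
  apply isClosed_of_finite_inter
  intro R
  have hsub : {w | w ∈ {w : ℂ | ∃ c ∈ S, w = p + om τ c} ∧ ‖w‖ ≤ R} ⊆
      (fun c => p + om τ c) '' {c | mc c ≤ ⌈(R + ‖p‖) / δ⌉₊} := by
    rintro w ⟨⟨c, hcS, rfl⟩, hwR⟩
    refine ⟨c, ?_, rfl⟩
    simp only [Set.mem_setOf_eq]
    by_cases hc0 : c = 0
    · simp [hc0, mc_zero]
    · have h1 : ‖om τ c‖ ≤ R + ‖p‖ := by
        calc ‖om τ c‖ = ‖(p + om τ c) - p‖ := by ring_nf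
          _ ≤ ‖p + om τ c‖ + ‖p‖ := norm_sub_le _ _
          _ ≤ R + ‖p‖ := by gcongr
      have h2 := hlow c hc0
      have h3 : (mc c : ℝ) ≤ (R + ‖p‖) / δ := by
        rw [le_div_iff₀ hδ]
        nlinarith
      have h4 : (mc c : ℝ) ≤ (⌈(R + ‖p‖) / δ⌉₊ : ℝ) := h3.trans (Nat.le_ceil _)
      exact_mod_cast h4
  exact ((finite_mc_le _).image _).subset hsub

lemma analytic_rest (τ p : ℂ) {δ : ℝ} (hδ : 0 < δ)
    (hlow : ∀ c : ℤ × ℤ, c ≠ 0 → δ * mc c ≤ ‖om τ c‖)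
    (s : Finset (ℤ × ℤ)) (z₁ : ℂ) (hcov : ∀ c : ℤ × ℤ, c ∉ s → z₁ ≠ p + om τ c) :
    ∃ A : ℂ → ℂ, AnalyticAt ℂ A z₁ ∧ ∀ z, wp τ p z = (∑ c ∈ s, g τ p c z) + A z := by
  classical
  obtain ⟨N, C, hN, hC, hbd⟩ := tail_bound τ p hδ hlow (‖z₁ - p‖ + 1) (by positivity)
  set s' : Finset (ℤ × ℤ) := s ∪ (Finset.Icc (-(N : ℤ), -(N : ℤ)) ((N : ℤ), (N : ℤ))) with hs'
  have hmem : ∀ c : ℤ × ℤ, c ∉ s' → N ≤ mc c ∧ c ∉ s := by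
    intro c hc
    rw [hs', Finset.mem_union, not_or] at hc
    refine ⟨?_, hc.1⟩
    by_contra h
    apply hc.2
    rw [Finset.mem_Icc, Prod.le_def, Prod.le_def]
    simp only [mc] at h
    have h2 := Nat.max_lt.mp (Nat.lt_of_not_le h)
    omega
  set P : Set ℂ := {w : ℂ | ∃ c ∈ ({c : ℤ × ℤ | c ∉ s'} : Set (ℤ × ℤ)), w = p + om τ c} with hP
  have hPclosed : IsClosed P := isClosed_latticeImage τ p hδ hlow _
  have hz₁P : z₁ ∉ P := by
    rintro ⟨c, hc, rfl⟩
    exact hcov c (hmem c hc).2 rfl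
  obtain ⟨ε, hε, hball⟩ := Metric.isOpen_iff.mp hPclosed.isOpen_compl z₁ hz₁P
  set ρ : ℝ := min (ε / 2) (1 / 2) with hρdef
  have hρ : 0 < ρ := lt_min (by linarith) (by norm_num)
  have hρ1 : ρ ≤ 1 := le_trans (min_le_right _ _) (by norm_num)
  have hsubP : Metric.ball z₁ ρ ⊆ Pᶜ :=
    fun w hw => hball (Metric.ball_subset_ball (le_trans (min_le_left _ _) (by linarith)) hw)
  have hne : ∀ c : ℤ × ℤ, c ∉ s' → ∀ z ∈ Metric.ball z₁ ρ, z - p - om τ c ≠ 0 := by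
    intro c hc z hz h0
    have hzP : z ∈ Pᶜ := hsubP hz
    apply hzP
    exact ⟨c, hc, by linear_combination h0⟩
  have hRball : ∀ z ∈ Metric.ball z₁ ρ, ‖z - p‖ ≤ ‖z₁ - p‖ + 1 := by
    intro z hz
    have hd : ‖z - z₁‖ < ρ := by
      rw [← dist_eq_norm]; exact Metric.mem_ball.mp hz
    calc ‖z - p‖ = ‖(z - z₁) + (z₁ - p)‖ := by ring_nf
      _ ≤ ‖z - z₁‖ + ‖z₁ - p‖ := norm_add_le _ _
      _ ≤ ‖z₁ - p‖ + 1 := by linarith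
  set tail : ℂ → ℂ := fun z => ∑' c : {c : ℤ × ℤ // c ∉ s'}, g τ p c.1 z with htail
  have hdiff : DifferentiableOn ℂ tail (Metric.ball z₁ ρ) := by
    apply Complex.differentiableOn_tsum_of_summable_norm
      (u := fun c : {c : ℤ × ℤ // c ∉ s'} => C * ((mc c.1 : ℝ) ^ 3)⁻¹)
      ((summable_invcube.mul_left C).subtype _)
    · intro i
      refine DifferentiableOn.sub ?_ (differentiableOn_const _)
      refine DifferentiableOn.inv ?_ ?_
      · exact (((differentiable_id.sub_const p).sub_const (om τ i.1)).pow 2).differentiableOn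
      · intro z hz
        exact pow_ne_zero 2 (hne i.1 i.2 z hz)
    · exact Metric.isOpen_ball
    · intro i w hw
      exact (hbd i.1 (hmem i.1 i.2).1 w (hRball w hw)).2
  refine ⟨fun z => (∑ c ∈ s' \ s, g τ p c z) + tail z, ?_, ?_⟩
  · apply AnalyticAt.add
    · apply Finset.analyticAt_fun_sum
      intro c hc
      have hcs : c ∉ s := (Finset.mem_sdiff.mp hc).2
      have hne0 : z₁ - p - om τ c ≠ 0 := by
        intro h0
        exact hcov c hcs (by linear_combination h0)
      apply AnalyticAt.sub _ analyticAt_const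
      apply AnalyticAt.inv
      · exact ((analyticAt_id.sub analyticAt_const).sub analyticAt_const).pow 2
      · exact pow_ne_zero 2 hne0
    · exact hdiff.analyticAt (Metric.ball_mem_nhds z₁ hρ)
  · intro z
    have h1 := Summable.sum_add_tsum_subtype_compl (summable_g τ p hδ hlow z) s'
    have h2 : ∑ c ∈ s' \ s, g τ p c z + ∑ c ∈ s, g τ p c z = ∑ c ∈ s', g τ p c z :=
      Finset.sum_sdiff (Finset.subset_union_left)
    rw [wp, ← h1, ← h2]
    ring

lemma wp_analyticAt (τ p : ℂ) {δ : ℝ} (hδ : 0 < δ)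
    (hlow : ∀ c : ℤ × ℤ, c ≠ 0 → δ * mc c ≤ ‖om τ c‖)
    (z₁ : ℂ) (hz : ∀ c : ℤ × ℤ, z₁ ≠ p + om τ c) : AnalyticAt ℂ (wp τ p) z₁ := by
  obtain ⟨A, hA, hrep⟩ := analytic_rest τ p hδ hlow ∅ z₁ (fun c _ => hz c)
  have he : wp τ p = A := funext fun z => by simpa using hrep z
  rw [he]
  exact hA

lemma order_nonneg_of_analytic (f : ℂ → ℂ) (x : ℂ) (hf : AnalyticAt ℂ f x) :
    0 ≤ meromorphicOrderAt' f x := by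
  rw [meromorphicOrderAt', dif_pos hf.meromorphicAt, hf.meromorphicOrderAt_eq]
  rcases eq_top_or_lt_top (analyticOrderAt f x) with h | h
  · rw [h]
    simp
  · obtain ⟨n, hn⟩ := WithTop.ne_top_iff_exists.mp h.ne
    rw [← hn]
    change (0 : WithTop ℤ) ≤ ENat.map (fun x : ℕ => (x : ℤ)) (n : ℕ∞)
    rw [ENat.map_coe]
    have h0 : ((0 : ℤ) : WithTop ℤ) ≤ ((n : ℤ) : WithTop ℤ) :=
      WithTop.coe_le_coe.mpr (Int.natCast_nonneg n)
    simpa using h0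

lemma wp_pole_rep (τ p : ℂ) (hτim : τ.im ≠ 0) {δ : ℝ} (hδ : 0 < δ)
    (hlow : ∀ c : ℤ × ℤ, c ≠ 0 → δ * mc c ≤ ‖om τ c‖)
    (c₀ : ℤ × ℤ) (z₁ : ℂ) (hz₁ : z₁ = p + om τ c₀) :
    ∃ A : ℂ → ℂ, AnalyticAt ℂ A z₁ ∧ ∀ z, wp τ p z = ((z - z₁) ^ 2)⁻¹ + A z := by
  classical
  have hcov : ∀ c : ℤ × ℤ, c ∉ ({c₀} : Finset (ℤ × ℤ)) → z₁ ≠ p + om τ c := by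
    intro c hc h
    apply hc
    rw [Finset.mem_singleton]
    apply om_inj hτim
    have h3 : p + om τ c = p + om τ c₀ := by rw [← h, hz₁]
    linear_combination h3
  obtain ⟨A, hA, hrep⟩ := analytic_rest τ p hδ hlow {c₀} z₁ hcov
  refine ⟨fun z => A z - Ec τ c₀, hA.sub analyticAt_const, fun z => ?_⟩
  have h1 := hrep z
  rw [Finset.sum_singleton] at h1
  rw [h1, g]
  have h2 : z - p - om τ c₀ = z - z₁ := by rw [hz₁]; ring
  rw [h2]
  ring

lemma wp_pole_order (τ p : ℂ) (hτim : τ.im ≠ 0) {δ : ℝ} (hδ : 0 < δ)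
    (hlow : ∀ c : ℤ × ℤ, c ≠ 0 → δ * mc c ≤ ‖om τ c‖)
    (c₀ : ℤ × ℤ) (z₁ : ℂ) (hz₁ : z₁ = p + om τ c₀) :
    MeromorphicAt (wp τ p) z₁ ∧
      meromorphicOrderAt' (wp τ p) z₁ = ((-2 : ℤ) : WithTop ℤ) := by
  obtain ⟨A, hA, hrep⟩ := wp_pole_rep τ p hτim hδ hlow c₀ z₁ hz₁
  have hfun : wp τ p = fun z => ((z - z₁) ^ 2)⁻¹ + A z := funext hrep
  have hm1 : MeromorphicAt (fun z => ((z - z₁) ^ 2)⁻¹) z₁ := by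
    have h1 : MeromorphicAt (fun z : ℂ => z - z₁) z₁ :=
      (analyticAt_id.sub analyticAt_const).meromorphicAt
    exact (h1.pow 2).inv
  have hm : MeromorphicAt (wp τ p) z₁ := by
    rw [hfun]
    exact hm1.add hA.meromorphicAt
  refine ⟨hm, ?_⟩
  rw [meromorphicOrderAt', dif_pos hm, meromorphicOrderAt_eq_int_iff hm]
  refine ⟨fun z => 1 + (z - z₁) ^ 2 * A z, ?_, by simp, ?_⟩
  · exact analyticAt_const.add (((analyticAt_id.sub analyticAt_const).pow 2).mul hA)
  · filter_upwards [self_mem_nhdsWithin] with z hz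
    have hzne : z - z₁ ≠ 0 := sub_ne_zero.mpr hz
    rw [hrep z, smul_eq_mul]
    have hzp : (z - z₁) ^ (-2 : ℤ) = ((z - z₁) ^ 2)⁻¹ := by
      rw [show (-2 : ℤ) = -((2 : ℕ) : ℤ) by norm_num, zpow_neg, zpow_natCast]
    rw [hzp]
    field_simp

/-- The box of radius `a`. -/
noncomputable def B (a : ℤ) : Finset (ℤ × ℤ) := Finset.Icc (-a, -a) (a, a)

lemma mem_B {a : ℤ} {c : ℤ × ℤ} :
    c ∈ B a ↔ (-a ≤ c.1 ∧ c.1 ≤ a) ∧ (-a ≤ c.2 ∧ c.2 ≤ a) := by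
  rw [B, Finset.mem_Icc, Prod.le_def, Prod.le_def]
  tauto

lemma card_B {a : ℤ} (ha : 0 ≤ a) : (B a).card = ((2 * a + 1).toNat) ^ 2 := by
  rw [B, Finset.card_Icc_prod]
  simp only [Int.card_Icc]
  rw [show (a : ℤ) + 1 - -a = 2 * a + 1 by ring]
  ring

lemma B_mono : Monotone fun n : ℕ => B (n : ℤ) := by
  intro a b hab
  intro c hc
  rw [mem_B] at hc ⊢
  have : (a : ℤ) ≤ (b : ℤ) := by exact_mod_cast hab
  omega

lemma wp_periodic (τ p : ℂ) {δ : ℝ} (hδ : 0 < δ)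
    (hlow : ∀ c : ℤ × ℤ, c ≠ 0 → δ * mc c ≤ ‖om τ c‖)
    (e : ℤ × ℤ) (he1 : e.1.natAbs ≤ 1) (he2 : e.2.natAbs ≤ 1) (z : ℂ) :
    wp τ p (z + om τ e) = wp τ p z := by
  classical
  set u : ℂ := om τ e with hu
  set φ : ℤ × ℤ → ℂ := fun d => ((z - p - om τ d) ^ 2)⁻¹ with hφ
  set Q : ℤ × ℤ → ℂ := fun c => g τ p c (z + u) - g τ p c z with hQdef
  have hQ : ∀ c, Q c = φ (c - e) - φ c := by
    intro c
    have h1 : z + u - p - om τ c = z - p - om τ (c - e) := by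
      rw [om_sub, hu]; ring
    simp only [hQdef, hφ, g, h1]
    ring
  have hs1 : Summable (fun c => g τ p c (z + u)) := summable_g τ p hδ hlow (z + u)
  have hs2 : Summable (fun c => g τ p c z) := summable_g τ p hδ hlow z
  have hQsum : Summable Q := hs1.sub hs2
  have htsum : ∑' c, Q c = wp τ p (z + u) - wp τ p z := by
    rw [hQdef, Summable.tsum_sub hs1 hs2, wp, wp]
  -- partial sums over boxes tend to the tsum
  have hexh : ∀ c : ℤ × ℤ, ∃ n : ℕ, c ∈ B (n : ℤ) := by
    intro c
    refine ⟨mc c, ?_⟩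
    rw [mem_B]
    simp only [mc] at *
    have h1 : c.1.natAbs ≤ mc c := le_max_left _ _
    have h2 : c.2.natAbs ≤ mc c := le_max_right _ _
    simp only [mc] at h1 h2
    omega
  have htend1 : Filter.Tendsto (fun n : ℕ => ∑ c ∈ B (n : ℤ), Q c) atTop
      (𝓝 (∑' c, Q c)) :=
    hQsum.hasSum.comp (tendsto_atTop_finset_of_monotone B_mono hexh)
  -- the partial sums tend to 0
  obtain ⟨N, C, hN, hC, hbd⟩ := tail_bound τ p hδ hlow ‖z - p‖ (norm_nonneg _)
  have htend0 : Filter.Tendsto (fun n : ℕ => ∑ c ∈ B (n : ℤ), Q c) atTop (𝓝 0) := by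
    apply squeeze_zero_norm' (a := fun n : ℕ => (192 / δ ^ 2) * ((n : ℝ))⁻¹)
    · filter_upwards [eventually_ge_atTop (N + 1)] with n hn
      have hn1 : 1 ≤ n := le_trans (by omega) hn
      have hnN : N ≤ n := by omega
      set D : Finset (ℤ × ℤ) := (B (n : ℤ)).image (· - e) with hD
      have hmemD : ∀ c : ℤ × ℤ, c ∈ D ↔ c + e ∈ B (n : ℤ) := by
        intro c
        rw [hD, Finset.mem_image]
        constructor
        · rintro ⟨a, ha, rfl⟩
          simpa [sub_add_cancel] using ha
        · intro h
          exact ⟨c + e, h, by ring⟩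
      have hTrw : ∑ c ∈ B (n : ℤ), Q c
          = ∑ c ∈ D \ B (n : ℤ), φ c - ∑ c ∈ B (n : ℤ) \ D, φ c := by
        rw [Finset.sum_sdiff_sub_sum_sdiff]
        have hDsum : ∑ c ∈ D, φ c = ∑ c ∈ B (n : ℤ), φ (c - e) :=
          Finset.sum_image (by intro a _ b _ h; exact sub_left_injective h)
        rw [hDsum, ← Finset.sum_sub_distrib]
        exact Finset.sum_congr rfl fun c _ => hQ c
      set ann : Finset (ℤ × ℤ) := B ((n : ℤ) + 1) \ B ((n : ℤ) - 1) with hann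
      have hsub1 : D \ B (n : ℤ) ⊆ ann := by
        intro c hc
        rw [Finset.mem_sdiff] at hc ⊢
        obtain ⟨hc1, hc2⟩ := hc
        rw [hmemD, mem_B] at hc1
        rw [mem_B] at hc2
        rw [mem_B, mem_B]
        simp only [Prod.fst_add, Prod.snd_add] at hc1
        omega
      have hsub2 : B (n : ℤ) \ D ⊆ ann := by
        intro c hc
        rw [Finset.mem_sdiff] at hc ⊢
        obtain ⟨hc1, hc2⟩ := hc
        rw [hmemD, mem_B] at hc2
        rw [mem_B] at hc1
        rw [mem_B, mem_B]
        simp only [Prod.fst_add, Prod.snd_add] at hc2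
        omega
      have hφbd : ∀ c ∈ ann, ‖φ c‖ ≤ ((δ * n / 2) ^ 2)⁻¹ := by
        intro c hc
        rw [hann, Finset.mem_sdiff, mem_B, mem_B] at hc
        have hmc : n ≤ mc c := by
          have : n ≤ c.1.natAbs ∨ n ≤ c.2.natAbs := by omega
          rcases this with h | h
          · exact le_trans h (le_max_left _ _)
          · exact le_trans h (le_max_right _ _)
        have hbd' := (hbd c (le_trans hnN hmc) z le_rfl).1
        have hmcn : (n : ℝ) ≤ (mc c : ℝ) := by exact_mod_cast hmc
        have hXpos : 0 < δ * n / 2 := by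
          have : (0 : ℝ) < n := by exact_mod_cast hn1
          positivity
        have hX : δ * n / 2 ≤ ‖z - p - om τ c‖ := by
          refine le_trans ?_ hbd'
          gcongr
        rw [hφ]
        simp only
        rw [norm_inv, norm_pow]
        apply inv_anti₀ (by positivity)
        gcongr
      have hcard : (ann.card : ℝ) ≤ 24 * n := by
        have hBsub : B ((n : ℤ) - 1) ⊆ B ((n : ℤ) + 1) := by
          intro c hc
          rw [mem_B] at hc ⊢
          omega
        have h1 : ann.card = ((2 * ((n : ℤ) + 1) + 1).toNat) ^ 2
            - ((2 * ((n : ℤ) - 1) + 1).toNat) ^ 2 := by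
          rw [hann, Finset.card_sdiff_of_subset hBsub, card_B (by omega), card_B (by omega)]
        have h2 : (2 * ((n : ℤ) + 1) + 1).toNat = 2 * n + 3 := by omega
        have h3 : (2 * ((n : ℤ) - 1) + 1).toNat = 2 * n - 1 := by omega
        rw [h1, h2, h3]
        have h4 : (2 * n + 3) ^ 2 - (2 * n - 1) ^ 2 ≤ 24 * n := by
          obtain ⟨m, rfl⟩ := Nat.exists_eq_add_of_le hn1
          have e1 : 2 * (1 + m) + 3 = 2 * m + 5 := by omega
          have e2 : 2 * (1 + m) - 1 = 2 * m + 1 := by omega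
          rw [e1, e2]
          have e3 : (2 * m + 5) ^ 2 = (2 * m + 1) ^ 2 + (16 * m + 24) := by ring
          rw [e3, Nat.add_sub_cancel_left]
          omega
        calc ((((2 * n + 3) ^ 2 - (2 * n - 1) ^ 2 : ℕ)) : ℝ) ≤ ((24 * n : ℕ) : ℝ) := by
              exact_mod_cast h4
          _ = 24 * n := by push_cast; ring
      have hsums : ∀ (t : Finset (ℤ × ℤ)), t ⊆ ann →
          ‖∑ c ∈ t, φ c‖ ≤ 24 * n * ((δ * n / 2) ^ 2)⁻¹ := by
        intro t ht
        calc ‖∑ c ∈ t, φ c‖ ≤ ∑ c ∈ t, ‖φ c‖ := norm_sum_le _ _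
          _ ≤ ∑ c ∈ ann, ‖φ c‖ :=
            Finset.sum_le_sum_of_subset_of_nonneg ht (fun _ _ _ => norm_nonneg _)
          _ ≤ ann.card • (((δ * n / 2) ^ 2)⁻¹) := Finset.sum_le_card_nsmul _ _ _ hφbd
          _ = (ann.card : ℝ) * ((δ * n / 2) ^ 2)⁻¹ := by rw [nsmul_eq_mul]
          _ ≤ 24 * n * ((δ * n / 2) ^ 2)⁻¹ := by
            apply mul_le_mul_of_nonneg_right hcard (by positivity)
      have hnR : (0 : ℝ) < n := by exact_mod_cast hn1
      calc ‖∑ c ∈ B (n : ℤ), Q c‖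
          ≤ ‖∑ c ∈ D \ B (n : ℤ), φ c‖ + ‖∑ c ∈ B (n : ℤ) \ D, φ c‖ := by
            rw [hTrw]; exact norm_sub_le _ _
        _ ≤ 24 * n * ((δ * n / 2) ^ 2)⁻¹ + 24 * n * ((δ * n / 2) ^ 2)⁻¹ :=
            add_le_add (hsums _ hsub1) (hsums _ hsub2)
        _ = (192 / δ ^ 2) * ((n : ℝ))⁻¹ := by
            have hδn : δ ≠ 0 := hδ.ne'
            have hnn : (n : ℝ) ≠ 0 := hnR.ne'
            field_simp
            ring
    · have h0 : Filter.Tendsto (fun n : ℕ => ((n : ℝ))⁻¹) atTop (𝓝 0) :=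
        tendsto_inv_atTop_nhds_zero_nat
      have := h0.const_mul (192 / δ ^ 2)
      simpa using this
  have h0 : ∑' c, Q c = 0 := tendsto_nhds_unique htend1 htend0
  rw [htsum] at h0
  exact sub_eq_zero.mp h0


lemma lattice_iff (τ p z : ℂ) : z - p ∈ latticeSet τ ↔ ∃ c : ℤ × ℤ, z = p + om τ c := by
  constructor
  · rintro ⟨m, n, h⟩
    exact ⟨(m, n), by rw [om]; linear_combination h⟩
  · rintro ⟨c, hc⟩
    exact ⟨c.1, c.2, by rw [om] at hc; linear_combination hc⟩

lemma main {τ : ℂ} (hτ : 0 < τ.im) (p : ℂ) :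
    ∃ f : ℂ → ℂ, IsElliptic τ f ∧
      (∀ z : ℂ, z - p ∉ latticeSet τ →
        AnalyticAt ℂ f z ∧ 0 ≤ meromorphicOrderAt' f z) ∧
      (∀ z : ℂ, z - p ∈ latticeSet τ →
        meromorphicOrderAt' f z = ((-2 : ℤ) : WithTop ℤ)) := by
  obtain ⟨δ, hδ, hlow⟩ := exists_del hτ
  have hτim : τ.im ≠ 0 := hτ.ne'
  refine ⟨wp τ p, ⟨?_, ?_, ?_⟩, ?_, ?_⟩
  · intro x _
    by_cases hx : x - p ∈ latticeSet τ
    · obtain ⟨c, hc⟩ := (lattice_iff τ p x).mp hx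
      exact (wp_pole_order τ p hτim hδ hlow c x hc).1
    · have hz : ∀ c, x ≠ p + om τ c := fun c h => hx ((lattice_iff τ p x).mpr ⟨c, h⟩)
      exact (wp_analyticAt τ p hδ hlow x hz).meromorphicAt
  · intro z
    have h := wp_periodic τ p hδ hlow (1, 0) (by norm_num) (by norm_num) z
    rwa [show om τ ((1 : ℤ), (0 : ℤ)) = 1 by rw [om]; norm_num] at h
  · intro z
    have h := wp_periodic τ p hδ hlow (0, 1) (by norm_num) (by norm_num) z
    rwa [show om τ ((0 : ℤ), (1 : ℤ)) = τ by rw [om]; norm_num] at h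
  · intro z hz
    have hzc : ∀ c, z ≠ p + om τ c := fun c h => hz ((lattice_iff τ p z).mpr ⟨c, h⟩)
    have hA := wp_analyticAt τ p hδ hlow z hzc
    exact ⟨hA, order_nonneg_of_analytic _ _ hA⟩
  · intro z hz
    obtain ⟨c, hc⟩ := (lattice_iff τ p z).mp hz
    exact (wp_pole_order τ p hτim hδ hlow c z hc).2

end WPAux

/-- For every `p : ℂ` there exists a `Λ`-elliptic function which is analytic away from
`p + Λ` and has a pole of order exactly `2` at every point of `p + Λ`
(e.g. the Weierstrass `℘`-function translated by `p`). -/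
theorem exists_elliptic_double_pole (τ : ℂ) (hτ : τ.im ≠ 0) (p : ℂ) :
    ∃ f : ℂ → ℂ, IsElliptic τ f ∧
      (∀ z : ℂ, z - p ∉ latticeSet τ →
        AnalyticAt ℂ f z ∧ 0 ≤ meromorphicOrderAt' f z) ∧
      (∀ z : ℂ, z - p ∈ latticeSet τ →
        meromorphicOrderAt' f z = ((-2 : ℤ) : WithTop ℤ)) := by
  rcases hτ.lt_or_gt with hneg | hpos
  · have hpos' : 0 < (-τ).im := by simpa using hneg
    obtain ⟨f, ⟨hmer, h1, h2⟩, ha, hp⟩ := WPAux.main hpos' p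
    have hset : latticeSet (-τ) = latticeSet τ := by
      ext w
      constructor
      · rintro ⟨m, n, h⟩
        exact ⟨m, -n, by push_cast; linear_combination h⟩
      · rintro ⟨m, n, h⟩
        exact ⟨m, -n, by push_cast; linear_combination h⟩
    rw [hset] at ha hp
    refine ⟨f, ⟨hmer, h1, ?_⟩, ha, hp⟩
    intro z
    have h3 := h2 (z + τ)
    rw [show z + τ + -τ = z by ring] at h3
    exact h3.symm
  · exact WPAux.main hpos p
end

section
/- Fix τ ∈ ℂ with Im τ ≠ 0, let Λ = {m + n·τ : m, n ∈ ℤ}, and let q ∈ ℂ. There is no Λ-elliptic function h : ℂ → ℂ that is analytic at every point z ∉ q + Λ and satisfies meromorphicOrderAt h z = −1 for every z ∈ q + Λ. In other words, there is no elliptic function whose only singularities modulo Λ are simple poles at a single lattice translate class. -/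
open Filter Topology


open Filter Topology

lemma NESSP.limAux {P u : ℂ → ℂ} {x : ℂ} (hu : AnalyticAt ℂ u x) (he : P =ᶠ[𝓝[≠] x] u) :
    limUnder (𝓝[≠] x) P = u x := by
  apply Filter.Tendsto.limUnder_eq
  exact (hu.continuousAt.continuousWithinAt (s := {x}ᶜ)).tendsto.congr' he.symm

lemma NESSP.analyticAt_limUnder {P : ℂ → ℂ}
    (hglob : ∀ y : ℂ, ∃ u, AnalyticAt ℂ u y ∧ P =ᶠ[𝓝[≠] y] u) (x : ℂ) :
    AnalyticAt ℂ (fun z => limUnder (𝓝[≠] z) P) x := by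
  obtain ⟨u, hu, he⟩ := hglob x
  have key : (fun z => limUnder (𝓝[≠] z) P) =ᶠ[𝓝 x] u := by
    have h1 : ∀ᶠ z in 𝓝 x, AnalyticAt ℂ u z := hu.eventually_analyticAt
    have h2 : ∀ᶠ z in 𝓝 x, ∀ᶠ w in 𝓝 z, w ≠ x → P w = u w :=
      (eventually_nhdsWithin_iff.mp he).eventually_nhds
    filter_upwards [h1, h2] with z hz1 hz2
    rcases eq_or_ne z x with rfl | hzx
    · exact NESSP.limAux hu he
    · have : P =ᶠ[𝓝[≠] z] u := by
        have h3 : ∀ᶠ w in 𝓝 z, P w = u w := by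
          filter_upwards [hz2, eventually_ne_nhds hzx] with w hw hw'
          exact hw hw'
        exact (h3.filter_mono nhdsWithin_le_nhds)
      exact NESSP.limAux hz1 this
  exact hu.congr key.symm

lemma NESSP.analyticAt_dslope_self {f : ℂ → ℂ} {x : ℂ} (hf : AnalyticAt ℂ f x) :
    AnalyticAt ℂ (dslope f x) x := by
  obtain ⟨p, hp⟩ := hf
  exact ⟨p.fslope, hp.has_fpower_series_dslope_fslope⟩

lemma NESSP.map_punct (f : ℂ → ℂ) (a b x : ℂ) (hb : b ≠ 0) (hf : ∀ z, f z = a + b * z) :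
    Filter.map f (𝓝[≠] x) = 𝓝[≠] (a + b * x) := by
  have hfe : f = fun z => a + b * z := funext hf
  subst hfe
  have := ((Homeomorph.mulLeft₀ b hb).trans (Homeomorph.addLeft a)).map_punctured_nhds_eq x
  exact this

lemma NESSP.tendsto_punct (f : ℂ → ℂ) (a b x y : ℂ) (hb : b ≠ 0) (hf : ∀ z, f z = a + b * z)
    (hy : a + b * x = y) : Filter.Tendsto f (𝓝[≠] x) (𝓝[≠] y) := by
  rw [Filter.Tendsto, NESSP.map_punct f a b x hb hf, hy]


namespace NESSP
variable {τ : ℂ} (hτ : τ.im ≠ 0)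

lemma lat_mem (m n : ℤ) : ((m : ℂ) + (n : ℂ) * τ) ∈ latticeSet τ := ⟨m, n, rfl⟩

lemma lat_add {a b : ℂ} (ha : a ∈ latticeSet τ) (hb : b ∈ latticeSet τ) :
    a + b ∈ latticeSet τ := by
  obtain ⟨m, n, rfl⟩ := ha; obtain ⟨m', n', rfl⟩ := hb
  exact ⟨m + m', n + n', by push_cast; ring⟩

lemma lat_neg {a : ℂ} (ha : a ∈ latticeSet τ) : -a ∈ latticeSet τ := by
  obtain ⟨m, n, rfl⟩ := ha
  exact ⟨-m, -n, by push_cast; ring⟩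

lemma lat_im (m n : ℤ) : ((m : ℂ) + (n : ℂ) * τ).im = n * τ.im := by
  simp [Complex.add_im, Complex.mul_im]

include hτ

lemma half_not : (2⁻¹ : ℂ) ∉ latticeSet τ := by
  rintro ⟨m, n, hmn⟩
  have him : (2⁻¹ : ℂ).im = n * τ.im := by rw [hmn]; exact lat_im m n
  simp at him
  rcases him with h | h
  · subst h
    have hre := congrArg Complex.re hmn
    simp at hre
    have : ((2 * m : ℤ) : ℝ) = 1 := by push_cast; linarith
    have : (2 * m : ℤ) = 1 := by exact_mod_cast this
    omega
  · exact hτ h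

lemma tauhalf_im_aux {z : ℂ} (hz : z.im = τ.im / 2) : z ∉ latticeSet τ := by
  rintro ⟨m, n, hmn⟩
  have him : z.im = n * τ.im := by rw [hmn]; exact lat_im m n
  have h0 : (2 * (n : ℝ) - 1) * τ.im = 0 := by rw [hz] at him; linarith
  rcases mul_eq_zero.mp h0 with h | h
  · have : ((2 * n : ℤ) : ℝ) = 1 := by push_cast; linarith
    have : (2 * n : ℤ) = 1 := by exact_mod_cast this
    omega
  · exact hτ h

lemma tauhalf_not : (τ / 2) ∉ latticeSet τ :=
  tauhalf_im_aux hτ (by simp [Complex.div_im])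

lemma tau12_not : (τ / 2 + 2⁻¹) ∉ latticeSet τ :=
  tauhalf_im_aux hτ (by simp [Complex.div_im, Complex.add_im])

omit hτ in
lemma lat_small {z : ℂ} (hz : z ∈ latticeSet τ) (h0 : z ≠ 0) :
    min 1 |τ.im| ≤ ‖z‖ := by
  obtain ⟨m, n, rfl⟩ := hz
  rcases eq_or_ne n 0 with rfl | hn
  · have hm : m ≠ 0 := by rintro rfl; simp at h0
    have : (1 : ℝ) ≤ |(m : ℝ)| := by exact_mod_cast Int.one_le_abs hm
    calc min 1 |τ.im| ≤ 1 := min_le_left _ _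
      _ ≤ |(m : ℝ)| := this
      _ = ‖((m : ℂ) + (0 : ℤ) * τ)‖ := by
          rw [show ((m : ℂ) + ((0 : ℤ) : ℂ) * τ) = (m : ℂ) by push_cast; ring,
            Complex.norm_intCast]
  · have h1 : (1 : ℝ) ≤ |(n : ℝ)| := by exact_mod_cast Int.one_le_abs hn
    calc min 1 |τ.im| ≤ |τ.im| := min_le_right _ _
      _ ≤ |(n : ℝ)| * |τ.im| := le_mul_of_one_le_left (abs_nonneg _) h1
      _ = |((m : ℂ) + (n : ℂ) * τ).im| := by rw [lat_im, abs_mul]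
      _ ≤ ‖_‖ := Complex.abs_im_le_norm _

omit hτ in
lemma lat_half_small {z : ℂ} (hz : z + 2⁻¹ ∈ latticeSet τ) :
    min 2⁻¹ |τ.im| ≤ ‖z‖ := by
  obtain ⟨m, n, hmn⟩ := hz
  rcases eq_or_ne n 0 with rfl | hn
  · have hre : z.re = m - 2⁻¹ := by
      have := congrArg Complex.re hmn
      simp at this; linarith
    have : (2⁻¹ : ℝ) ≤ |(m : ℝ) - 2⁻¹| := by
      rcases le_or_gt 1 (m : ℝ) with h | h
      · rw [abs_of_nonneg (by linarith)]; linarith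
      · have : (m : ℝ) ≤ 0 := by
          have : (m : ℤ) ≤ 0 := by
            by_contra hc; push_neg at hc
            have : (1 : ℝ) ≤ (m : ℝ) := by exact_mod_cast hc
            linarith
          exact_mod_cast this
        rw [abs_of_nonpos (by linarith)]; linarith
    calc min 2⁻¹ |τ.im| ≤ 2⁻¹ := min_le_left _ _
      _ ≤ |z.re| := by rw [hre]; exact this
      _ ≤ ‖z‖ := Complex.abs_re_le_norm z
  · have h1 : (1 : ℝ) ≤ |(n : ℝ)| := by exact_mod_cast Int.one_le_abs hn
    have him : z.im = n * τ.im := by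
      have := congrArg Complex.im hmn
      simpa [lat_im] using this
    calc min 2⁻¹ |τ.im| ≤ |τ.im| := min_le_right _ _
      _ ≤ |(n : ℝ)| * |τ.im| := le_mul_of_one_le_left (abs_nonneg _) h1
      _ = |z.im| := by rw [him, abs_mul]
      _ ≤ ‖z‖ := Complex.abs_im_le_norm z

omit hτ in
lemma lat_countable : (latticeSet τ).Countable := by
  have : latticeSet τ ⊆ Set.range (fun p : ℤ × ℤ => ((p.1 : ℂ) + (p.2 : ℂ) * τ)) := by
    rintro z ⟨m, n, rfl⟩; exact ⟨(m, n), rfl⟩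
  exact (Set.countable_range _).mono this

end NESSP

open NESSP

/-- There is no elliptic function whose only singularities modulo `Λ` are simple poles
at a single lattice translate class `q + Λ`. -/
theorem no_elliptic_single_simple_pole (τ : ℂ) (hτ : τ.im ≠ 0) (q : ℂ) :
    ¬ ∃ h : ℂ → ℂ, IsElliptic τ h ∧
      (∀ z : ℂ, z - q ∉ latticeSet τ → AnalyticAt ℂ h z) ∧
      (∀ z : ℂ, z - q ∈ latticeSet τ →
        meromorphicOrderAt' h z = ((-1 : ℤ) : WithTop ℤ)) := by
  rintro ⟨h, ⟨hmero, hper1, hperτ⟩, hana, hord⟩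
  set L := latticeSet τ with hL
  -- pole representation
  have pole : ∀ p : ℂ, p - q ∈ L → ∃ v : ℂ → ℂ, AnalyticAt ℂ v p ∧ v p ≠ 0 ∧
      ∀ᶠ z in 𝓝[≠] p, h z = (z - p)⁻¹ * v z := by
    intro p hp
    have hm : MeromorphicAt h p := hmero p (Set.mem_univ p)
    have hp' := hord p hp
    rw [meromorphicOrderAt', dif_pos hm, meromorphicOrderAt_eq_int_iff hm] at hp'
    obtain ⟨v, hv, hv0, hve⟩ := hp'
    refine ⟨v, hv, hv0, ?_⟩
    filter_upwards [hve] with z hz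
    rw [hz, zpow_neg_one, smul_eq_mul]
  -- integer periodicity of h
  have hZ : ∀ (m n : ℤ) (w : ℂ), h (w + ((m : ℂ) + (n : ℂ) * τ)) = h w := by
    intro m n w
    have p1 : Function.Periodic h ((m : ℂ) * 1) := (Function.Periodic.int_mul hper1 m)
    have pτ : Function.Periodic h ((n : ℂ) * τ) := (Function.Periodic.int_mul hperτ n)
    calc h (w + ((m : ℂ) + (n : ℂ) * τ)) = h ((w + (m : ℂ) * 1) + (n : ℂ) * τ) := by ring_nf
      _ = h (w + (m : ℂ) * 1) := pτ _
      _ = h w := p1 _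
  set g : ℂ → ℂ := fun z => h (q + z) - h (q - z) with hg
  have glat : ∀ (m n : ℤ) (w : ℂ), g (w + ((m : ℂ) + (n : ℂ) * τ)) = g w := by
    intro m n w
    show h (q + (w + ((m:ℂ) + (n:ℂ)*τ))) - h (q - (w + ((m:ℂ)+(n:ℂ)*τ)))
      = h (q + w) - h (q - w)
    rw [show q + (w + ((m:ℂ) + (n:ℂ)*τ)) = (q + w) + ((m:ℂ) + (n:ℂ)*τ) by ring, hZ,
      show q - (w + ((m:ℂ) + (n:ℂ)*τ)) = (q - w) + (((-m : ℤ):ℂ) + ((-n : ℤ):ℂ)*τ) by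
        push_cast; ring, hZ]
  have godd : ∀ z, g (-z) = - g z := by
    intro z
    show h (q + -z) - h (q - -z) = -(h (q + z) - h (q - z))
    rw [show q + -z = q - z by ring, show q - -z = q + z by ring]; ring
  have ghalf : g 2⁻¹ = 0 := by
    show h (q + 2⁻¹) - h (q - 2⁻¹) = 0
    rw [show q + 2⁻¹ = (q - 2⁻¹) + 1 by ring, hper1, sub_self]
  have gtau : g (τ / 2) = 0 := by
    show h (q + τ/2) - h (q - τ/2) = 0
    rw [show q + τ/2 = (q - τ/2) + τ by ring, hperτ, sub_self]
  have gvan2 : ∀ x : ℂ, x + 2⁻¹ ∈ L → g x = 0 := by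
    intro x hx
    obtain ⟨m, n, hmn⟩ := hx
    have hx' : x = -2⁻¹ + ((m : ℂ) + (n : ℂ) * τ) := by linear_combination hmn
    rw [hx', glat, show (-2⁻¹ : ℂ) = -(2⁻¹ : ℂ) from rfl, godd, ghalf, neg_zero]
  have gzero_shift : ∀ x ∈ L, g (x + 2⁻¹) = 0 := by
    intro x hx
    obtain ⟨m, n, rfl⟩ := hx
    rw [show ((m : ℂ) + (n : ℂ) * τ) + 2⁻¹ = 2⁻¹ + ((m : ℂ) + (n : ℂ) * τ) by ring, glat, ghalf]
  have ganal : ∀ x : ℂ, x ∉ L → AnalyticAt ℂ g x := by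
    intro x hx
    have h1 : AnalyticAt ℂ h (q + x) := hana _ (by rw [show q + x - q = x by ring]; exact hx)
    have h2 : AnalyticAt ℂ h (q - x) := by
      refine hana _ ?_
      rw [show q - x - q = -x by ring]
      exact fun hc => hx (by simpa using lat_neg hc)
    have hc1 : AnalyticAt ℂ (fun z => h (q + z)) x := by
      have := h1.comp (f := fun z : ℂ => q + z) (analyticAt_const.add analyticAt_id)
      simpa [Function.comp_def] using this
    have hc2 : AnalyticAt ℂ (fun z => h (q - z)) x := by
      have := h2.comp (f := fun z : ℂ => q - z) (analyticAt_const.sub analyticAt_id)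
      simpa [Function.comp_def] using this
    exact hc1.sub hc2
  set P : ℂ → ℂ := fun z => g z * g (z + 2⁻¹) with hP
  have PanalAt : ∀ x : ℂ, x ∉ L → x + 2⁻¹ ∉ L → AnalyticAt ℂ P x := by
    intro x h1 h2
    have := (ganal _ h2).comp (f := fun z : ℂ => z + 2⁻¹) (analyticAt_id.add analyticAt_const)
    exact (ganal x h1).mul (by simpa [Function.comp_def] using this)
  -- the global witness property
  have hglob : ∀ y : ℂ, ∃ u : ℂ → ℂ, AnalyticAt ℂ u y ∧ P =ᶠ[𝓝[≠] y] u := by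
    intro y
    by_cases hyΛ : y ∈ L
    · -- y is a lattice point: first factor has a simple pole, second vanishes
      obtain ⟨v₁, hv₁, hv₁0, he₁⟩ := pole (q + y) (by rw [show q + y - q = y by ring]; exact hyΛ)
      obtain ⟨v₂, hv₂, hv₂0, he₂⟩ := pole (q - y)
        (by rw [show q - y - q = -y by ring]; exact lat_neg hyΛ)
      have t₁ : Tendsto (fun z : ℂ => q + z) (𝓝[≠] y) (𝓝[≠] (q + y)) :=
        NESSP.tendsto_punct _ q 1 y (q + y) one_ne_zero (fun z => by ring) (by ring)
      have t₂ : Tendsto (fun z : ℂ => q - z) (𝓝[≠] y) (𝓝[≠] (q - y)) :=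
        NESSP.tendsto_punct _ q (-1) y (q - y) (by norm_num) (fun z => by ring) (by ring)
      have e₁ := t₁.eventually he₁
      have e₂ := t₂.eventually he₂
      have hA : AnalyticAt ℂ (fun z => v₁ (q + z) + v₂ (q - z)) y := by
        have h1 : AnalyticAt ℂ (fun z : ℂ => v₁ (q + z)) y := by
          have := ((show AnalyticAt ℂ v₁ ((fun z : ℂ => q + z) y) from hv₁).comp
            (analyticAt_const.add analyticAt_id))
          simpa [Function.comp_def] using this
        have h2 : AnalyticAt ℂ (fun z : ℂ => v₂ (q - z)) y := by
          have := ((show AnalyticAt ℂ v₂ ((fun z : ℂ => q - z) y) from hv₂).comp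
            (analyticAt_const.sub analyticAt_id))
          simpa [Function.comp_def] using this
        exact h1.add h2
      have hyhalf : y + 2⁻¹ ∉ L := by
        intro hc
        refine half_not hτ ?_
        rw [show (2⁻¹ : ℂ) = (y + 2⁻¹) + -y by ring]
        exact lat_add hc (lat_neg hyΛ)
      have hw : AnalyticAt ℂ (fun z => g (z + 2⁻¹)) y := by
        have := (ganal _ hyhalf).comp (f := fun z : ℂ => z + 2⁻¹)
          (analyticAt_id.add analyticAt_const)
        simpa [Function.comp_def] using this
      have hw0 : g (y + 2⁻¹) = 0 := gzero_shift y hyΛ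
      refine ⟨fun z => (v₁ (q + z) + v₂ (q - z)) * dslope (fun w => g (w + 2⁻¹)) y z,
        hA.mul (NESSP.analyticAt_dslope_self hw), ?_⟩
      filter_upwards [e₁, e₂, self_mem_nhdsWithin] with z h1 h2 h0
      have hzy : z ≠ y := h0
      have hzy' : z - y ≠ 0 := sub_ne_zero.mpr hzy
      have hgz : g z = (z - y)⁻¹ * (v₁ (q + z) + v₂ (q - z)) := by
        show h (q + z) - h (q - z) = _
        rw [h1, h2, show q + z - (q + y) = z - y by ring,
          show q - z - (q - y) = -(z - y) by ring, inv_neg]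
        ring
      have hdw : g (z + 2⁻¹) = (z - y) * dslope (fun w => g (w + 2⁻¹)) y z := by
        have hh := sub_smul_dslope (fun w => g (w + 2⁻¹)) y z
        rw [smul_eq_mul, hw0, sub_zero] at hh
        exact hh.symm
      show g z * g (z + 2⁻¹) = _
      rw [hgz, hdw]
      field_simp
      ring
    · by_cases hy2 : y + 2⁻¹ ∈ L
      · -- the shifted point is a lattice point: second factor has the pole, g vanishes at y
        obtain ⟨v₁, hv₁, hv₁0, he₁⟩ := pole (q + (y + 2⁻¹))
          (by rw [show q + (y + 2⁻¹) - q = y + 2⁻¹ by ring]; exact hy2)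
        obtain ⟨v₂, hv₂, hv₂0, he₂⟩ := pole (q - (y + 2⁻¹))
          (by rw [show q - (y + 2⁻¹) - q = -(y + 2⁻¹) by ring]; exact lat_neg hy2)
        have t₁ : Tendsto (fun z : ℂ => q + (z + 2⁻¹)) (𝓝[≠] y) (𝓝[≠] (q + (y + 2⁻¹))) :=
          NESSP.tendsto_punct _ (q + 2⁻¹) 1 y (q + (y + 2⁻¹)) one_ne_zero
            (fun z => by ring) (by ring)
        have t₂ : Tendsto (fun z : ℂ => q - (z + 2⁻¹)) (𝓝[≠] y) (𝓝[≠] (q - (y + 2⁻¹))) :=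
          NESSP.tendsto_punct _ (q - 2⁻¹) (-1) y (q - (y + 2⁻¹)) (by norm_num)
            (fun z => by ring) (by ring)
        have e₁ := t₁.eventually he₁
        have e₂ := t₂.eventually he₂
        have hB : AnalyticAt ℂ (fun z => v₁ (q + (z + 2⁻¹)) + v₂ (q - (z + 2⁻¹))) y := by
          have hin1 : AnalyticAt ℂ (fun z : ℂ => q + (z + 2⁻¹)) y :=
            analyticAt_const.add (analyticAt_id.add analyticAt_const)
          have hin2 : AnalyticAt ℂ (fun z : ℂ => q - (z + 2⁻¹)) y :=
            analyticAt_const.sub (analyticAt_id.add analyticAt_const)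
          have h1 : AnalyticAt ℂ (fun z : ℂ => v₁ (q + (z + 2⁻¹))) y := by
            have := AnalyticAt.comp (f := fun z : ℂ => q + (z + 2⁻¹)) (x := y)
              (show AnalyticAt ℂ v₁ ((fun z : ℂ => q + (z + 2⁻¹)) y) from hv₁) hin1
            simpa [Function.comp_def] using this
          have h2 : AnalyticAt ℂ (fun z : ℂ => v₂ (q - (z + 2⁻¹))) y := by
            have := AnalyticAt.comp (f := fun z : ℂ => q - (z + 2⁻¹)) (x := y)
              (show AnalyticAt ℂ v₂ ((fun z : ℂ => q - (z + 2⁻¹)) y) from hv₂) hin2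
            simpa [Function.comp_def] using this
          exact h1.add h2
        have hganal : AnalyticAt ℂ g y := ganal y hyΛ
        have hg0 : g y = 0 := gvan2 y hy2
        refine ⟨fun z => dslope g y z * (v₁ (q + (z + 2⁻¹)) + v₂ (q - (z + 2⁻¹))),
          (NESSP.analyticAt_dslope_self hganal).mul hB, ?_⟩
        filter_upwards [e₁, e₂, self_mem_nhdsWithin] with z h1 h2 h0
        have hzy : z ≠ y := h0
        have hzy' : z - y ≠ 0 := sub_ne_zero.mpr hzy
        have hgz : g (z + 2⁻¹) = (z - y)⁻¹ * (v₁ (q + (z + 2⁻¹)) + v₂ (q - (z + 2⁻¹))) := by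
          show h (q + (z + 2⁻¹)) - h (q - (z + 2⁻¹)) = _
          rw [h1, h2, show q + (z + 2⁻¹) - (q + (y + 2⁻¹)) = z - y by ring,
            show q - (z + 2⁻¹) - (q - (y + 2⁻¹)) = -(z - y) by ring, inv_neg]
          ring
        have hdw : g z = (z - y) * dslope g y z := by
          have hh := sub_smul_dslope g y z
          rw [smul_eq_mul, hg0, sub_zero] at hh
          exact hh.symm
        show g z * g (z + 2⁻¹) = _
        rw [hgz, hdw]
        field_simp
      · exact ⟨P, PanalAt y hyΛ hy2, Filter.EventuallyEq.rfl⟩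
  set Q : ℂ → ℂ := fun z => limUnder (𝓝[≠] z) P with hQ
  have hQa : ∀ x, AnalyticAt ℂ Q x := fun x => NESSP.analyticAt_limUnder hglob x
  have hQP : ∀ x : ℂ, x ∉ L → x + 2⁻¹ ∉ L → Q x = P x :=
    fun x h1 h2 => NESSP.limAux (PanalAt x h1 h2) Filter.EventuallyEq.rfl
  -- periodicity of Q
  have gper1 : ∀ z, g (z + 1) = g z := by
    intro z; have := glat 1 0 z; norm_num at this; exact this
  have gperτ : ∀ z, g (z + τ) = g z := by
    intro z; have := glat 0 1 z; norm_num at this; exact this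
  have Pper1 : ∀ z, P (z + 1) = P z := by
    intro z
    show g (z+1) * g (z + 1 + 2⁻¹) = g z * g (z + 2⁻¹)
    rw [gper1, show z + 1 + 2⁻¹ = (z + 2⁻¹) + 1 by ring, gper1]
  have Pperτ : ∀ z, P (z + τ) = P z := by
    intro z
    show g (z+τ) * g (z + τ + 2⁻¹) = g z * g (z + 2⁻¹)
    rw [gperτ, show z + τ + 2⁻¹ = (z + 2⁻¹) + τ by ring, gperτ]
  have hQper : ∀ c : ℂ, (∀ z, P (z + c) = P z) → ∀ z, Q (z + c) = Q z := by
    intro c hc z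
    have hmap : Filter.map (fun w => w + c) (𝓝[≠] z) = 𝓝[≠] (z + c) := by
      have := NESSP.map_punct (fun w => w + c) c 1 z one_ne_zero (fun w => by ring)
      rwa [show c + 1 * z = z + c by ring] at this
    show limUnder (𝓝[≠] (z + c)) P = limUnder (𝓝[≠] z) P
    rw [← hmap]
    simp only [limUnder, Filter.map_map]
    rw [show (P ∘ fun w => w + c) = P from funext fun w => by simpa [Function.comp] using hc w]
  have QZ : ∀ (m n : ℤ) (w : ℂ), Q (w + ((m : ℂ) + (n : ℂ) * τ)) = Q w := by
    intro m n w
    have p1 : Function.Periodic Q ((m : ℂ) * 1) := Function.Periodic.int_mul (hQper 1 Pper1) m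
    have pτ : Function.Periodic Q ((n : ℂ) * τ) := Function.Periodic.int_mul (hQper τ Pperτ) n
    calc Q (w + ((m : ℂ) + (n : ℂ) * τ)) = Q ((w + (m : ℂ) * 1) + (n : ℂ) * τ) := by ring_nf
      _ = Q (w + (m : ℂ) * 1) := pτ _
      _ = Q w := p1 _
  -- Liouville
  have hconst : ∀ a b : ℂ, Q a = Q b := by
    have hQd : Differentiable ℂ Q := fun x => (hQa x).differentiableAt
    have hKc : IsCompact ((fun p : ℝ × ℝ => ((p.1 : ℂ) + (p.2 : ℂ) * τ)) ''
        (Set.Icc (0:ℝ) 1 ×ˢ Set.Icc (0:ℝ) 1)) :=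
      (isCompact_Icc.prod isCompact_Icc).image (by fun_prop)
    have hsub : Set.range Q ⊆ Q '' ((fun p : ℝ × ℝ => ((p.1 : ℂ) + (p.2 : ℂ) * τ)) ''
        (Set.Icc (0:ℝ) 1 ×ˢ Set.Icc (0:ℝ) 1)) := by
      rintro _ ⟨z, rfl⟩
      set t : ℝ := z.im / τ.im with ht
      set s : ℝ := z.re - t * τ.re with hs
      have hzst : z = (s : ℂ) + (t : ℂ) * τ := by
        apply Complex.ext
        · simp [hs]
        · simp [ht]
          field_simp
      refine ⟨((Int.fract s : ℝ) : ℂ) + ((Int.fract t : ℝ) : ℂ) * τ,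
        ⟨(Int.fract s, Int.fract t), Set.mem_prod.mpr
          ⟨Set.mem_Icc.mpr ⟨Int.fract_nonneg s, (Int.fract_lt_one s).le⟩,
           Set.mem_Icc.mpr ⟨Int.fract_nonneg t, (Int.fract_lt_one t).le⟩⟩, rfl⟩, ?_⟩
      have hzz : z = (((Int.fract s : ℝ) : ℂ) + ((Int.fract t : ℝ) : ℂ) * τ)
          + ((⌊s⌋ : ℂ) + (⌊t⌋ : ℂ) * τ) := by
        conv_lhs => rw [hzst, ← Int.fract_add_floor s, ← Int.fract_add_floor t]
        push_cast
        ring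
      conv_rhs => rw [hzz]
      rw [QZ]
    have hbQ : Bornology.IsBounded (Set.range Q) :=
      ((hKc.image hQd.continuous).isBounded).subset hsub
    exact fun a b => hQd.apply_eq_apply_of_bounded hbQ a b
  -- Q vanishes
  have hQ0 : ∀ z, Q z = 0 := by
    intro z
    rw [hconst z (τ / 2), hQP _ (tauhalf_not hτ) (tau12_not hτ)]
    show g (τ/2) * g (τ/2 + 2⁻¹) = 0
    rw [gtau, zero_mul]
  obtain ⟨v, hv, hv0, hve⟩ := pole q (by rw [sub_self]; exact ⟨0, 0, by norm_num⟩)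
  have t₁ : Tendsto (fun z : ℂ => q + z) (𝓝[≠] (0:ℂ)) (𝓝[≠] q) :=
    NESSP.tendsto_punct _ q 1 0 q one_ne_zero (fun z => by ring) (by ring)
  have t₂ : Tendsto (fun z : ℂ => q - z) (𝓝[≠] (0:ℂ)) (𝓝[≠] q) :=
    NESSP.tendsto_punct _ q (-1) 0 q (by norm_num) (fun z => by ring) (by ring)
  have e₁ := t₁.eventually hve
  have e₂ := t₂.eventually hve
  have hA : AnalyticAt ℂ (fun z => v (q + z) + v (q - z)) 0 := by
    have h1 : AnalyticAt ℂ (fun z : ℂ => v (q + z)) 0 := by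
      have := ((show AnalyticAt ℂ v (q + 0) by rw [add_zero]; exact hv).comp
        (f := fun z : ℂ => q + z) (analyticAt_const.add analyticAt_id))
      simpa [Function.comp_def] using this
    have h2 : AnalyticAt ℂ (fun z : ℂ => v (q - z)) 0 := by
      have := ((show AnalyticAt ℂ v (q - 0) by rw [sub_zero]; exact hv).comp
        (f := fun z : ℂ => q - z) (analyticAt_const.sub analyticAt_id))
      simpa [Function.comp_def] using this
    exact h1.add h2
  have hA0 : v (q + 0) + v (q - 0) ≠ 0 := by
    rw [add_zero, sub_zero, show v q + v q = 2 * v q by ring]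
    exact mul_ne_zero two_ne_zero hv0
  have evA : ∀ᶠ z in 𝓝[≠] (0:ℂ), v (q + z) + v (q - z) ≠ 0 :=
    (hA.continuousAt.eventually_ne hA0).filter_mono nhdsWithin_le_nhds
  have evg : ∀ᶠ z in 𝓝[≠] (0:ℂ), g z ≠ 0 := by
    filter_upwards [e₁, e₂, evA, self_mem_nhdsWithin] with z h1 h2 h3 h0
    have hz0 : z ≠ (0:ℂ) := h0
    show h (q + z) - h (q - z) ≠ 0
    rw [h1, h2, show q + z - q = z by ring, show q - z - q = -z by ring]
    rw [show z⁻¹ * v (q + z) - (-z)⁻¹ * v (q - z) = z⁻¹ * (v (q + z) + v (q - z)) by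
      rw [inv_neg]; ring]
    exact mul_ne_zero (inv_ne_zero hz0) h3
  have evL : ∀ᶠ z in 𝓝[≠] (0:ℂ), z ∉ L := by
    have hδ : (0:ℝ) < min 1 |τ.im| := lt_min one_pos (abs_pos.mpr hτ)
    have hball : ∀ᶠ z in 𝓝 (0:ℂ), ‖z‖ < min 1 |τ.im| := by
      filter_upwards [Metric.ball_mem_nhds (0:ℂ) hδ] with z hz
      simpa [Complex.dist_eq] using hz
    filter_upwards [hball.filter_mono nhdsWithin_le_nhds, self_mem_nhdsWithin] with z hz h0
    intro hzL
    exact absurd (lat_small hzL h0) (not_le.mpr hz)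
  have ev2 : ∀ᶠ z in 𝓝[≠] (0:ℂ), z + 2⁻¹ ∉ L := by
    have hδ : (0:ℝ) < min 2⁻¹ |τ.im| := lt_min (by norm_num) (abs_pos.mpr hτ)
    have hball : ∀ᶠ z in 𝓝 (0:ℂ), ‖z‖ < min 2⁻¹ |τ.im| := by
      filter_upwards [Metric.ball_mem_nhds (0:ℂ) hδ] with z hz
      simpa [Complex.dist_eq] using hz
    filter_upwards [hball.filter_mono nhdsWithin_le_nhds] with z hz
    intro hzL
    exact absurd (lat_half_small hzL) (not_le.mpr hz)
  by_cases hb : ∃ b : ℂ, b ∉ L ∧ b + 2⁻¹ ∉ L ∧ g b ≠ 0 ∧ g (b + 2⁻¹) ≠ 0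
  · obtain ⟨b, h1, h2, h3, h4⟩ := hb
    have hb0 := hQ0 b
    rw [hQP b h1 h2] at hb0
    exact (mul_ne_zero h3 h4) hb0
  · push_neg at hb
    have evshift : ∀ᶠ z in 𝓝[≠] (0:ℂ), g (z + 2⁻¹) = 0 := by
      filter_upwards [evL, ev2, evg] with z h1 h2 h3
      exact hb z h1 h2 h3
    have hmap : Filter.map (fun z : ℂ => z + 2⁻¹) (𝓝[≠] (0:ℂ)) = 𝓝[≠] (2⁻¹:ℂ) := by
      have := NESSP.map_punct (fun z : ℂ => z + 2⁻¹) 2⁻¹ 1 0 one_ne_zero (fun z => by ring)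
      rwa [show (2⁻¹ : ℂ) + 1 * 0 = 2⁻¹ by ring] at this
    have evhalf : ∀ᶠ w in 𝓝[≠] (2⁻¹:ℂ), g w = 0 := by
      rw [← hmap, Filter.eventually_map]
      exact evshift
    have evfull : g =ᶠ[𝓝 (2⁻¹:ℂ)] 0 := by
      rw [Filter.EventuallyEq, ← nhdsNE_sup_pure, Filter.eventually_sup]
      refine ⟨evhalf, ?_⟩
      rw [Filter.eventually_pure]
      exact ghalf
    have hgU : AnalyticOnNhd ℂ g ((latticeSet τ)ᶜ) := fun x hx => ganal x hx
    have hpre : IsPreconnected ((latticeSet τ)ᶜ : Set ℂ) := by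
      have hrank : 1 < Module.rank ℝ ℂ := by
        rw [Complex.rank_real_complex]
        norm_num
      exact ((lat_countable (τ := τ)).isPathConnected_compl_of_one_lt_rank
        hrank).isConnected.isPreconnected
    have hEq : Set.EqOn g 0 ((latticeSet τ)ᶜ) :=
      hgU.eqOn_zero_of_preconnected_of_eventuallyEq_zero hpre (half_not hτ) evfull
    obtain ⟨z, hgz, hzL⟩ := (evg.and evL).exists
    exact hgz (hEq hzL)
end

section
/- Let U, V ⊆ ℂ be open sets, let K ≥ 1, and let f : ℂ → ℂ be continuously differentiable on U (ContDiffOn ℝ 1 f U), injective on U, with f '' U = V, and suppose that for every z ∈ U the real-linear derivative D f_z = fderiv ℝ f z satisfies ‖D f_z‖² ≤ K · det(D f_z), where ‖·‖ is the operator norm and det is the determinant of D f_z viewed as a linear map of the real plane. Then for every function u : ℂ → ℝ that is continuously differentiable on V one has ∫_U ‖fderiv ℝ (u ∘ f) z‖² dz ≤ K · ∫_V ‖fderiv ℝ u w‖² dw, where both integrals are with respect to Lebesgue measure. -/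
open Complex MeasureTheory ENNReal

lemma clm_apply_eq {E : Type*} [NormedAddCommGroup E] [NormedSpace ℝ E]
    (L : ℂ →L[ℝ] E) (z : ℂ) : L z = z.re • L 1 + z.im • L I := by
  have h : z = z.re • (1 : ℂ) + z.im • I := by
    simp [Complex.real_smul, Complex.re_add_im]
  conv_lhs => rw [h]
  rw [map_add, _root_.map_smul, _root_.map_smul]

lemma det_clm (M : ℂ →L[ℝ] ℂ) :
    LinearMap.det (M : ℂ →ₗ[ℝ] ℂ) = (M 1).re * (M I).im - (M I).re * (M 1).im := by
  rw [← LinearMap.det_toMatrix Complex.basisOneI, Matrix.det_fin_two]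
  simp [LinearMap.toMatrix_apply]

lemma repr_aux (a b z : ℂ) :
    z.re • a + z.im • b = ((a - I*b)/2) * z + ((a + I*b)/2) * (starRingEnd ℂ) z := by
  apply Complex.ext <;>
    simp [Complex.real_smul, Complex.mul_re, Complex.mul_im, Complex.div_re, Complex.div_im,
      Complex.normSq_apply] <;> ring

lemma normSq_aux (a b : ℂ) :
    Complex.normSq ((a - I*b)/2) - Complex.normSq ((a + I*b)/2)
      = a.re * b.im - b.re * a.im := by
  simp [Complex.normSq_apply, Complex.div_re, Complex.div_im, Complex.mul_re, Complex.mul_im]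
  ring

-- M z = α z + β z̄
lemma M_repr (M : ℂ →L[ℝ] ℂ) (z : ℂ) :
    M z = ((M 1 - I * M I)/2) * z + ((M 1 + I * M I)/2) * (starRingEnd ℂ) z := by
  rw [clm_apply_eq M z]; exact repr_aux _ _ _

lemma det_eq_normSq (M : ℂ →L[ℝ] ℂ) :
    LinearMap.det (M : ℂ →ₗ[ℝ] ℂ)
      = Complex.normSq ((M 1 - I * M I)/2) - Complex.normSq ((M 1 + I * M I)/2) := by
  rw [det_clm, normSq_aux]

lemma exists_unit (α β : ℂ) : ∃ z : ℂ, ‖z‖ = 1 ∧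
    ‖(α * z + β * (starRingEnd ℂ) z)‖ = ‖α‖ + ‖β‖ := by
  by_cases hα : α = 0
  · exact ⟨1, by simp, by simp [hα]⟩
  by_cases hβ : β = 0
  · exact ⟨1, by simp, by simp [hβ]⟩
  set γ : ℂ := (starRingEnd ℂ) α * β with hγdef
  have hγ : γ ≠ 0 := mul_ne_zero (by simpa using hα) hβ
  refine ⟨Complex.exp ((γ.arg/2 : ℝ) * I), Complex.norm_exp_ofReal_mul_I _, ?_⟩
  set z := Complex.exp ((γ.arg/2 : ℝ) * I) with hz
  have hz2 : z * z = γ / ‖γ‖ := by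
    rw [hz, ← Complex.exp_add]
    have h : ((γ.arg/2 : ℝ) : ℂ) * I + ((γ.arg/2 : ℝ) : ℂ) * I = (γ.arg : ℂ) * I := by
      push_cast; ring
    rw [h, _root_.eq_div_iff (by simpa using norm_ne_zero_iff.mpr hγ), mul_comm]
    exact Complex.norm_mul_exp_arg_mul_I γ
  have hzabs : ‖z‖ = 1 := Complex.norm_exp_ofReal_mul_I _
  have h1 : (starRingEnd ℂ) z * z = 1 := by
    rw [Complex.conj_mul']
    norm_cast
    simp [hzabs]
  have hconj : α * z + β * (starRingEnd ℂ) z = (starRingEnd ℂ) z * (α * (z*z) + β) := by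
    calc α * z + β * (starRingEnd ℂ) z
        = α * z * ((starRingEnd ℂ) z * z) + β * (starRingEnd ℂ) z := by rw [h1]; ring
      _ = (starRingEnd ℂ) z * (α * (z*z) + β) := by ring
  rw [hconj, norm_mul]
  have habsz : ‖((starRingEnd ℂ) z)‖ = 1 := by simp [hzabs]
  rw [habsz, one_mul, hz2]
  have hbα : ‖α‖ ≠ 0 := by simpa using hα
  have hbβ : ‖β‖ ≠ 0 := by simpa using hβ
  have key : α * (γ / ‖γ‖) = ((‖α‖ / ‖β‖ : ℝ) : ℂ) * β := by
    have h3 : α * γ = ((‖α‖ : ℝ)^2 : ℂ) * β := by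
      rw [hγdef, ← mul_assoc, Complex.mul_conj]
      norm_cast
      rw [Complex.sq_norm]
    have habsγ : ‖γ‖ = ‖α‖ * ‖β‖ := by
      rw [hγdef]; simp
    rw [mul_div_assoc'] at *
    rw [h3, habsγ]
    push_cast
    have hbαC : (‖α‖ : ℂ) ≠ 0 := by exact_mod_cast hbα
    have hbβC : (‖β‖ : ℂ) ≠ 0 := by exact_mod_cast hbβ
    field_simp
  rw [key]
  have h2 : (↑(‖α‖ / ‖β‖) : ℂ) * β + β
      = ((‖α‖ / ‖β‖ + 1 : ℝ) : ℂ) * β := by push_cast; ring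
  rw [h2, norm_mul, Complex.norm_real, Real.norm_eq_abs, _root_.abs_of_nonneg (by positivity)]
  field_simp

lemma L_repr (L : ℂ →L[ℝ] ℝ) (z : ℂ) :
    L z = ((⟨L 1, L I⟩ : ℂ) * (starRingEnd ℂ) z).re := by
  rw [clm_apply_eq L z]
  simp [Complex.mul_re, smul_eq_mul]
  ring

lemma L_norm_le (L : ℂ →L[ℝ] ℝ) : ‖L‖ ≤ ‖(⟨L 1, L I⟩ : ℂ)‖ := by
  apply L.opNorm_le_bound (norm_nonneg _)
  intro z
  rw [L_repr]
  calc ‖((⟨L 1, L I⟩ : ℂ) * (starRingEnd ℂ) z).re‖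
      ≤ ‖((⟨L 1, L I⟩ : ℂ) * (starRingEnd ℂ) z)‖ := by
        rw [Real.norm_eq_abs]; exact Complex.abs_re_le_norm _
    _ = ‖(⟨L 1, L I⟩ : ℂ)‖ * ‖z‖ := by
        rw [norm_mul]; simp

lemma M_norm_ge (M : ℂ →L[ℝ] ℂ) :
    ‖((M 1 - I * M I)/2)‖ + ‖((M 1 + I * M I)/2)‖ ≤ ‖M‖ := by
  obtain ⟨z, hz1, hz2⟩ := exists_unit ((M 1 - I * M I)/2) ((M 1 + I * M I)/2)
  calc ‖((M 1 - I * M I)/2)‖ + ‖((M 1 + I * M I)/2)‖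
      = ‖M z‖ := by rw [M_repr M z, hz2]
    _ ≤ ‖M‖ * ‖z‖ := M.le_opNorm z
    _ = ‖M‖ := by rw [hz1, mul_one]

lemma comp_repr (L : ℂ →L[ℝ] ℝ) (M : ℂ →L[ℝ] ℂ) (z : ℂ) :
    (L.comp M) z = (((⟨L 1, L I⟩ : ℂ) * (starRingEnd ℂ) ((M 1 - I * M I)/2)
      + (starRingEnd ℂ) (⟨L 1, L I⟩ : ℂ) * ((M 1 + I * M I)/2)) * (starRingEnd ℂ) z).re := by
  rw [ContinuousLinearMap.comp_apply, L_repr, M_repr]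
  set c : ℂ := (⟨L 1, L I⟩ : ℂ)
  set α := (M 1 - I * M I)/2
  set β := (M 1 + I * M I)/2
  simp only [map_add, map_mul, Complex.add_re, Complex.mul_re, Complex.conj_re, Complex.conj_im,
    Complex.add_im, Complex.mul_im, Complex.conj_conj]
  ring

lemma comp_norm_ge (L : ℂ →L[ℝ] ℝ) (M : ℂ →L[ℝ] ℂ) :
    ‖(⟨L 1, L I⟩ : ℂ)‖ * (‖((M 1 - I * M I)/2)‖
      - ‖((M 1 + I * M I)/2)‖) ≤ ‖L.comp M‖ := by
  set c : ℂ := (⟨L 1, L I⟩ : ℂ) with hc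
  set α := (M 1 - I * M I)/2 with hα
  set β := (M 1 + I * M I)/2 with hβ
  set c' : ℂ := c * (starRingEnd ℂ) α + (starRingEnd ℂ) c * β with hc'
  have h1 : ‖c‖ * (‖α‖ - ‖β‖) ≤ ‖c'‖ := by
    have := norm_sub_norm_le (c * (starRingEnd ℂ) α) (-((starRingEnd ℂ) c * β))
    simp only [norm_neg, sub_neg_eq_add] at this
    calc ‖c‖ * (‖α‖ - ‖β‖)
        = ‖c * (starRingEnd ℂ) α‖ - ‖(starRingEnd ℂ) c * β‖ := by
          simp [norm_mul]; ring
      _ ≤ ‖c * (starRingEnd ℂ) α + (starRingEnd ℂ) c * β‖ := this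
      _ = ‖c'‖ := by rw [hc']
  refine h1.trans ?_
  by_cases h0 : c' = 0
  · rw [h0]; simpa using norm_nonneg (L.comp M)
  have habs : ‖c'‖ ≠ 0 := norm_ne_zero_iff.mpr h0
  have hz : ‖(c' / (‖c'‖ : ℂ))‖ = 1 := by
    rw [norm_div, Complex.norm_real, Real.norm_eq_abs, _root_.abs_of_nonneg (norm_nonneg _)]
    field_simp
  have happly : (L.comp M) (c' / (‖c'‖ : ℂ)) = ‖c'‖ := by
    rw [comp_repr, ← hα, ← hβ, ← hc, ← hc']
    rw [map_div₀]
    have : (starRingEnd ℂ) ((‖c'‖ : ℝ) : ℂ) = ((‖c'‖ : ℝ) : ℂ) := by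
      exact Complex.conj_ofReal _
    rw [this, mul_div_assoc']
    rw [Complex.mul_conj, ← Complex.ofReal_div, Complex.ofReal_re, Complex.normSq_eq_norm_sq]
    rw [sq]
    field_simp
  calc ‖c'‖ = ‖(L.comp M) (c' / (‖c'‖ : ℂ))‖ := by
        rw [happly, Real.norm_eq_abs, _root_.abs_of_nonneg (norm_nonneg _)]
    _ ≤ ‖L.comp M‖ * ‖(c' / (‖c'‖ : ℂ))‖ := (L.comp M).le_opNorm _
    _ = ‖L.comp M‖ := by rw [hz, mul_one]

lemma key1 (K : ℝ) (M : ℂ →L[ℝ] ℂ) (L : ℂ →L[ℝ] ℝ)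
    (h : ‖M‖^2 ≤ K * LinearMap.det (M : ℂ →ₗ[ℝ] ℂ)) :
    ‖L.comp M‖^2 ≤ K * (‖L‖^2 * LinearMap.det (M : ℂ →ₗ[ℝ] ℂ)) := by
  have h1 : ‖L.comp M‖ ≤ ‖L‖ * ‖M‖ := L.opNorm_comp_le M
  have h2 : ‖L.comp M‖^2 ≤ (‖L‖ * ‖M‖)^2 :=
    pow_le_pow_left₀ (norm_nonneg _) h1 2
  have h3 : ‖L‖^2 * ‖M‖^2 ≤ ‖L‖^2 * (K * LinearMap.det (M : ℂ →ₗ[ℝ] ℂ)) :=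
    mul_le_mul_of_nonneg_left h (sq_nonneg _)
  calc ‖L.comp M‖^2 ≤ (‖L‖ * ‖M‖)^2 := h2
    _ = ‖L‖^2 * ‖M‖^2 := by ring
    _ ≤ ‖L‖^2 * (K * LinearMap.det (M : ℂ →ₗ[ℝ] ℂ)) := h3
    _ = K * (‖L‖^2 * LinearMap.det (M : ℂ →ₗ[ℝ] ℂ)) := by ring

lemma key2 (K : ℝ) (hK : 1 ≤ K) (M : ℂ →L[ℝ] ℂ) (L : ℂ →L[ℝ] ℝ)
    (h : ‖M‖^2 ≤ K * LinearMap.det (M : ℂ →ₗ[ℝ] ℂ)) :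
    ‖L‖^2 * LinearMap.det (M : ℂ →ₗ[ℝ] ℂ) ≤ K * ‖L.comp M‖^2 := by
  set s := ‖((M 1 - I * M I)/2)‖ with hs
  set t := ‖((M 1 + I * M I)/2)‖ with ht
  set C := ‖(⟨L 1, L I⟩ : ℂ)‖ with hC
  set N := ‖L.comp M‖ with hN
  have hdet : LinearMap.det (M : ℂ →ₗ[ℝ] ℂ) = s^2 - t^2 := by
    rw [det_eq_normSq, hs, ht, Complex.sq_norm, Complex.sq_norm]
  have hs0 : 0 ≤ s := norm_nonneg _
  have ht0 : 0 ≤ t := norm_nonneg _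
  have hC0 : 0 ≤ C := norm_nonneg _
  have hN0 : 0 ≤ N := norm_nonneg _
  have hK0 : 0 < K := lt_of_lt_of_le one_pos hK
  have h1 : (s + t)^2 ≤ K * (s^2 - t^2) := by
    have := M_norm_ge M
    rw [← hs, ← ht] at this
    calc (s+t)^2 ≤ ‖M‖^2 := pow_le_pow_left₀ (by positivity) this 2
      _ ≤ K * (s^2 - t^2) := by rw [← hdet]; exact h
  have hst : t ≤ s := by
    by_contra h'
    push_neg at h'
    have h6 : (0:ℝ) < t^2 - s^2 := by nlinarith
    nlinarith [sq_nonneg (s + t), mul_pos hK0 h6]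
  have h2 : ‖L‖ ≤ C := L_norm_le L
  have h3 : C * (s - t) ≤ N := comp_norm_ge L M
  have h4 : (s + t) * (s - t) ≤ K * (s - t)^2 := by
    rcases eq_or_lt_of_le (by positivity : (0:ℝ) ≤ s + t) with h0 | h0
    · have hs' : s = 0 := by linarith
      have ht' : t = 0 := by linarith
      simp [hs', ht']
    · have h5 : s + t ≤ K * (s - t) := by
        have := (mul_le_mul_iff_right₀ h0).mp (by nlinarith : (s+t) * (s+t) ≤ (s+t) * (K * (s-t)))
        exact this
      nlinarith [mul_le_mul_of_nonneg_right h5 (sub_nonneg.2 hst)]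
  rw [hdet]
  calc ‖L‖^2 * (s^2 - t^2) ≤ C^2 * (s^2 - t^2) := by
        apply mul_le_mul_of_nonneg_right (pow_le_pow_left₀ (norm_nonneg L) h2 2)
        nlinarith
    _ = C^2 * ((s+t)*(s-t)) := by ring
    _ ≤ C^2 * (K * (s-t)^2) := mul_le_mul_of_nonneg_left h4 (sq_nonneg _)
    _ = K * (C * (s-t))^2 := by ring
    _ ≤ K * N^2 := by
        apply mul_le_mul_of_nonneg_left _ (le_of_lt hK0)
        apply pow_le_pow_left₀ (mul_nonneg hC0 (sub_nonneg.2 hst)) h3 2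



/-- Quasi-invariance of the Dirichlet energy under a `K`-quasiconformal map: if
`f : U → V` is a `C¹` bijection with `‖Df_z‖² ≤ K · det (Df_z)` everywhere on `U`, then
for every `C¹` function `u` on `V` the Dirichlet energy of `u ∘ f` on `U` is at most `K`
times the Dirichlet energy of `u` on `V`. -/
theorem dirichlet_energy_quasiconformal (U V : Set ℂ) (hU : IsOpen U) (hV : IsOpen V)
    (K : ℝ) (hK : 1 ≤ K) (f : ℂ → ℂ)
    (hf : ContDiffOn ℝ 1 f U) (hinj : Set.InjOn f U) (himg : f '' U = V)
    (hqc : ∀ z ∈ U, ‖fderiv ℝ f z‖ ^ 2 ≤ K * LinearMap.det (fderiv ℝ f z : ℂ →ₗ[ℝ] ℂ))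
    (u : ℂ → ℝ) (hu : ContDiffOn ℝ 1 u V) :
    ∫ z in U, ‖fderiv ℝ (u ∘ f) z‖ ^ 2 ≤ K * ∫ w in V, ‖fderiv ℝ u w‖ ^ 2 := by
  have hK0 : (0:ℝ) < K := lt_of_lt_of_le one_pos hK
  have hmaps : Set.MapsTo f U V := himg ▸ Set.mapsTo_image f U
  have hfd : ∀ z ∈ U, DifferentiableAt ℝ f z := fun z hz =>
    (hf.differentiableOn one_ne_zero).differentiableAt (hU.mem_nhds hz)
  have hud : ∀ w ∈ V, DifferentiableAt ℝ u w := fun w hw =>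
    (hu.differentiableOn one_ne_zero).differentiableAt (hV.mem_nhds hw)
  have hchain : ∀ z ∈ U, fderiv ℝ (u ∘ f) z = (fderiv ℝ u (f z)).comp (fderiv ℝ f z) :=
    fun z hz => fderiv_comp (x := z) (hud _ (hmaps hz)) (hfd z hz)
  have hdet_nonneg : ∀ z ∈ U, 0 ≤ LinearMap.det (fderiv ℝ f z : ℂ →ₗ[ℝ] ℂ) := by
    intro z hz
    have := hqc z hz
    nlinarith [sq_nonneg ‖fderiv ℝ f z‖]
  -- composite is C¹ on U
  have huf : ContDiffOn ℝ 1 (u ∘ f) U := hu.comp hf hmaps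
  -- strong measurability of the two integrands
  have hmeas1 : AEStronglyMeasurable (fun z => ‖fderiv ℝ (u ∘ f) z‖ ^ 2)
      (volume.restrict U) := by
    have h := huf.continuousOn_fderiv_of_isOpen hU le_rfl
    exact ((h.norm).pow 2).aestronglyMeasurable hU.measurableSet
  have hmeas2 : AEStronglyMeasurable (fun w => ‖fderiv ℝ u w‖ ^ 2)
      (volume.restrict V) := by
    have h := hu.continuousOn_fderiv_of_isOpen hV le_rfl
    exact ((h.norm).pow 2).aestronglyMeasurable hV.measurableSet
  set A : ℝ≥0∞ := ∫⁻ z in U, ENNReal.ofReal (‖fderiv ℝ (u ∘ f) z‖ ^ 2) with hA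
  set B : ℝ≥0∞ := ∫⁻ w in V, ENNReal.ofReal (‖fderiv ℝ u w‖ ^ 2) with hB
  have hIA : ∫ z in U, ‖fderiv ℝ (u ∘ f) z‖ ^ 2 = A.toReal := by
    rw [hA, integral_eq_lintegral_of_nonneg_ae (ae_of_all _ fun z => sq_nonneg _) hmeas1]
  have hIB : ∫ w in V, ‖fderiv ℝ u w‖ ^ 2 = B.toReal := by
    rw [hB, integral_eq_lintegral_of_nonneg_ae (ae_of_all _ fun w => sq_nonneg _) hmeas2]
  -- change of variables
  have hderivWithin : ∀ z ∈ U, HasFDerivWithinAt f (fderiv ℝ f z) U z :=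
    fun z hz => (hfd z hz).hasFDerivAt.hasFDerivWithinAt
  have hcov : B = ∫⁻ z in U, ENNReal.ofReal |(fderiv ℝ f z).det|
      * ENNReal.ofReal (‖fderiv ℝ u (f z)‖ ^ 2) := by
    rw [hB, ← himg]
    exact lintegral_image_eq_lintegral_abs_det_fderiv_mul volume hU.measurableSet
      hderivWithin hinj _
  -- pointwise bounds
  have hpt1 : ∀ z ∈ U, ENNReal.ofReal (‖fderiv ℝ (u ∘ f) z‖ ^ 2)
      ≤ ENNReal.ofReal K * (ENNReal.ofReal |(fderiv ℝ f z).det|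
        * ENNReal.ofReal (‖fderiv ℝ u (f z)‖ ^ 2)) := by
    intro z hz
    rw [← ENNReal.ofReal_mul (abs_nonneg _), ← ENNReal.ofReal_mul hK0.le]
    apply ENNReal.ofReal_le_ofReal
    rw [hchain z hz, _root_.abs_of_nonneg (hdet_nonneg z hz)]
    have := key1 K (fderiv ℝ f z) (fderiv ℝ u (f z)) (hqc z hz)
    calc ‖(fderiv ℝ u (f z)).comp (fderiv ℝ f z)‖ ^ 2
        ≤ K * (‖fderiv ℝ u (f z)‖ ^ 2 * LinearMap.det (fderiv ℝ f z : ℂ →ₗ[ℝ] ℂ)) := this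
      _ = K * ((fderiv ℝ f z).det * ‖fderiv ℝ u (f z)‖ ^ 2) := by
          rw [ContinuousLinearMap.det]; ring
  have hpt2 : ∀ z ∈ U, ENNReal.ofReal |(fderiv ℝ f z).det|
        * ENNReal.ofReal (‖fderiv ℝ u (f z)‖ ^ 2)
      ≤ ENNReal.ofReal K * ENNReal.ofReal (‖fderiv ℝ (u ∘ f) z‖ ^ 2) := by
    intro z hz
    rw [← ENNReal.ofReal_mul (abs_nonneg _), ← ENNReal.ofReal_mul hK0.le]
    apply ENNReal.ofReal_le_ofReal
    rw [hchain z hz, _root_.abs_of_nonneg (hdet_nonneg z hz)]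
    have := key2 K hK (fderiv ℝ f z) (fderiv ℝ u (f z)) (hqc z hz)
    calc (fderiv ℝ f z).det * ‖fderiv ℝ u (f z)‖ ^ 2
        = ‖fderiv ℝ u (f z)‖ ^ 2 * LinearMap.det (fderiv ℝ f z : ℂ →ₗ[ℝ] ℂ) := by
          rw [ContinuousLinearMap.det]; ring
      _ ≤ K * ‖(fderiv ℝ u (f z)).comp (fderiv ℝ f z)‖ ^ 2 := this
  -- integral bounds
  have hAB : A ≤ ENNReal.ofReal K * B := by
    rw [hcov, ← lintegral_const_mul' _ _ ENNReal.ofReal_ne_top]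
    apply lintegral_mono_ae
    filter_upwards [ae_restrict_mem hU.measurableSet] with z hz
    exact hpt1 z hz
  have hBA : B ≤ ENNReal.ofReal K * A := by
    rw [hcov, hA, ← lintegral_const_mul' _ _ ENNReal.ofReal_ne_top]
    apply lintegral_mono_ae
    filter_upwards [ae_restrict_mem hU.measurableSet] with z hz
    exact hpt2 z hz
  rw [hIA, hIB]
  by_cases hBtop : B = ⊤
  · have h7 : ENNReal.ofReal K * A = ⊤ := top_le_iff.mp (hBtop ▸ hBA)
    have hAtop : A = ⊤ := by
      rcases ENNReal.mul_eq_top.mp h7 with h | h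
      · exact h.2
      · exact absurd h.1 ENNReal.ofReal_ne_top
    rw [hAtop, hBtop]
    simp
  · have hAfin : A ≠ ⊤ := by
      intro hAtop
      rw [hAtop] at hAB
      have : ENNReal.ofReal K * B ≠ ⊤ :=
        ENNReal.mul_ne_top ENNReal.ofReal_ne_top hBtop
      exact this (top_le_iff.mp hAB)
    have := ENNReal.toReal_mono (ENNReal.mul_ne_top ENNReal.ofReal_ne_top hBtop) hAB
    rwa [ENNReal.toReal_mul, ENNReal.toReal_ofReal hK0.le] at this
end
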